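/- arXiv:2509.11806 — 6 statements merged into one kernel-verified Lean document; each statement's English description precedes it below -/
import Mathlib

section
/- Let (G, ν) be a computably enumerable numbered group such that G is amenable. If for some integer n ≥ 3 there exists a computable function which, given any two-element set D ⊆ ℕ, produces a finite set F ⊆ ℕ such that ν(F) is a (1/n)-Følner set with respect to ν(D) and |F| = |ν(F)|, then (G, ν) is computable, i.e., the set {(i,j) : ν(i) = ν(j)} is decidable. -/
set_option maxHeartbeats 1000000

/-- The strictly sorted list of elements of a `Finset ℕ`, computed from its code. -/
def natList (F : Finset ℕ) : List ℕ :=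
  Denumerable.raise' (Denumerable.ofNat (List ℕ) (@Encodable.encode (Finset ℕ) Primcodable.toEncodable F)) 0

lemma natList_sorted (F : Finset ℕ) : (natList F).Pairwise (· < ·) :=
  (Denumerable.raise'_sorted _ _).pairwise

lemma mem_natList (F : Finset ℕ) (x : ℕ) : x ∈ natList F ↔ x ∈ F := by
  have h0 : Denumerable.ofNat (Finset ℕ)
      (@Encodable.encode (Finset ℕ) Primcodable.toEncodable F) = F :=
    Denumerable.ofNat_encode F
  conv_rhs => rw [← h0]
  rw [show ∀ k, Denumerable.ofNat (Finset ℕ) k =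
      Finset.map (Denumerable.eqv ℕ).symm.toEmbedding
        (Denumerable.raise'Finset (Denumerable.ofNat (List ℕ) k) 0) from fun k => rfl]
  simp [natList, Denumerable.raise'Finset, Denumerable.eqv]
  exact Iff.rfl

lemma raise'_foldl (l : List ℕ) : ∀ (acc : List ℕ) (n : ℕ),
    (l.foldl (fun p m => ((m + p.2) :: p.1, m + p.2 + 1)) (acc, n)).1
      = (Denumerable.raise' l n).reverse ++ acc := by
  induction l with
  | nil => intro acc n; simp [Denumerable.raise']
  | cons m l ih => intro acc n; simp [Denumerable.raise', ih]

lemma natList_primrec : Primrec natList := by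
  have h1 : Primrec fun F : Finset ℕ => Denumerable.ofNat (List ℕ) (@Encodable.encode (Finset ℕ) Primcodable.toEncodable F) :=
    (Primrec.ofNat _).comp Primrec.encode
  have hsum : Primrec fun q : Finset ℕ × ((List ℕ × ℕ) × ℕ) => q.2.2 + q.2.1.2 :=
    Primrec.nat_add.comp (Primrec.snd.comp Primrec.snd)
      (Primrec.snd.comp (Primrec.fst.comp Primrec.snd))
  have hstep : Primrec₂ fun (_ : Finset ℕ) (p : (List ℕ × ℕ) × ℕ) =>
      (((p.2 + p.1.2) :: p.1.1, p.2 + p.1.2 + 1) : List ℕ × ℕ) :=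
    Primrec.pair
      (Primrec.list_cons.comp hsum (Primrec.fst.comp (Primrec.fst.comp Primrec.snd)))
      (Primrec.succ.comp hsum)
  refine (Primrec.list_reverse.comp
    (Primrec.fst.comp (Primrec.list_foldl h1 (Primrec.const (([], 0) : List ℕ × ℕ)) hstep))).of_eq
    fun F => ?_
  rw [raise'_foldl]
  simp [natList]

/-- Boolean membership in a list of naturals. -/
def natMemb (L : List ℕ) (x : ℕ) : Bool := L.foldr (fun z b => (z == x) || b) false

lemma natMemb_iff (L : List ℕ) (x : ℕ) : natMemb L x = true ↔ x ∈ L := by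
  induction L with
  | nil => simp [natMemb]
  | cons a L ih =>
    show ((a == x) || natMemb L x) = true ↔ _
    simp only [Bool.or_eq_true, beq_iff_eq, ih, List.mem_cons]
    exact or_congr ⟨Eq.symm, Eq.symm⟩ Iff.rfl

lemma natMemb_primrec : Primrec₂ natMemb := by
  have h : Primrec₂ fun (a : List ℕ × ℕ) (p : ℕ × Bool) => ((p.1 == a.2) || p.2) :=
    (Primrec.dom_bool₂ (· || ·)).comp
      (Primrec.beq.comp (Primrec.fst.comp Primrec.snd) (Primrec.snd.comp Primrec.fst))
      (Primrec.snd.comp Primrec.snd)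
  exact Primrec.list_foldr Primrec.fst (Primrec.const false) h

lemma sorted_eq_pair {L : List ℕ} (hL : L.Pairwise (· < ·)) {i j : ℕ} (hij : i < j)
    (h : ∀ x, x ∈ L ↔ x = i ∨ x = j) : L = [i, j] := by
  have hs2 : ([i, j] : List ℕ).Pairwise (· < ·) := by simp [hij]
  have hperm : List.Perm L [i, j] := by
    rw [List.perm_ext_iff_of_nodup hL.nodup (by simp [hij.ne])]
    intro a; simp [h a]
  exact hperm.eq_of_pairwise' hL hs2

/-- `F` is a `(1/n)`-Følner set with respect to `D`:
`F` is nonempty and `|F \ xF| ≤ |F|/n` for every `x ∈ D`. -/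
def IsFolner {G : Type} [Group G] [DecidableEq G] (n : ℕ) (D F : Finset G) : Prop :=
  F.Nonempty ∧ ∀ x ∈ D, n * (F \ F.image (x * ·)).card ≤ F.card

theorem stmt2 (G : Type) [Group G] [DecidableEq G] (ν : ℕ → G)
    (hsurj : Function.Surjective ν)
    (mul : ℕ → ℕ → ℕ) (inv : ℕ → ℕ)
    (hmulc : Computable₂ mul) (hinvc : Computable inv)
    (hmulν : ∀ i j, ν (mul i j) = ν i * ν j) (hinvν : ∀ i, ν (inv i) = (ν i)⁻¹)
    (hce : REPred fun p : ℕ × ℕ => ν p.1 = ν p.2)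
    -- G is amenable
    (hamen : ∀ n : ℕ, 1 ≤ n → ∀ D : Finset G, ∃ F : Finset G, IsFolner n D F)
    -- for some n ≥ 3 there is a computable function producing Følner sets for two-element D
    (n : ℕ) (hn : 3 ≤ n)
    (f : Finset ℕ → Finset ℕ) (hfc : Computable f)
    (hf : ∀ D : Finset ℕ, D.card = 2 →
      IsFolner n (D.image ν) ((f D).image ν) ∧ ((f D).image ν).card = (f D).card) :
    -- (G, ν) is computable
    ComputablePred fun p : ℕ × ℕ => ν p.1 = ν p.2 := by
  classical
  obtain ⟨c, hc⟩ := Nat.Partrec.Code.exists_code.1 hce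
  set st : ℕ → ℕ → Bool := fun e s => (Nat.Partrec.Code.evaln s c e).isSome with hst_def
  have hst_prim : Primrec₂ st :=
    Primrec.option_isSome.comp (Nat.Partrec.Code.primrec_evaln.comp
      (Primrec.pair (Primrec.pair Primrec.snd (Primrec.const c)) Primrec.fst))
  have hkey : ∀ u v : ℕ, ν u = ν v ↔ ∃ s, st (Nat.pair u v) s = true := by
    intro u v
    have henc : Encodable.encode ((u, v) : ℕ × ℕ) = Nat.pair u v := by
      simp [Encodable.encode_prod_val, Nat.pair]
    have hdec : (Encodable.decode (Nat.pair u v) : Option (ℕ × ℕ)) = some (u, v) := by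
      rw [← henc]; exact Encodable.encodek _
    have h1 : (Nat.Partrec.Code.eval c (Nat.pair u v)).Dom ↔ ν u = ν v := by
      rw [hc]
      simp only [hdec, Part.coe_some, Part.bind_some, Part.map_Dom]
      constructor
      · rintro ⟨hp, -⟩
        exact hp
      · intro hp
        exact ⟨hp, trivial⟩
    have h2 : (Nat.Partrec.Code.eval c (Nat.pair u v)).Dom ↔
        ∃ s, st (Nat.pair u v) s = true := by
      rw [Part.dom_iff_mem]
      constructor
      · rintro ⟨x, hx⟩
        obtain ⟨k, hk⟩ := Nat.Partrec.Code.evaln_complete.1 hx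
        exact ⟨k, by simp [hst_def, Option.isSome_iff_exists]; exact ⟨x, hk⟩⟩
      · rintro ⟨s, hs⟩
        obtain ⟨x, hx⟩ := Option.isSome_iff_exists.1 hs
        exact ⟨x, Nat.Partrec.Code.evaln_complete.2 ⟨s, hx⟩⟩
    rw [← h1, h2]
  set C : ℕ × ℕ → ℕ → Bool := fun a m =>
    (!decide (a.1 = a.2)) &&
    ((decide (natList (Denumerable.ofNat (Finset ℕ) m.unpair.1) = [a.1, a.2])) ||
     (decide (natList (Denumerable.ofNat (Finset ℕ) m.unpair.1) = [a.2, a.1]))) &&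
    natMemb (natList (f (Denumerable.ofNat (Finset ℕ) m.unpair.1)))
      m.unpair.2.unpair.2.unpair.1 &&
    natMemb (natList (f (Denumerable.ofNat (Finset ℕ) m.unpair.1)))
      m.unpair.2.unpair.2.unpair.2 &&
    (!decide (m.unpair.2.unpair.2.unpair.1 = m.unpair.2.unpair.2.unpair.2)) &&
    st (Nat.pair (mul a.1 m.unpair.2.unpair.2.unpair.1)
      (mul a.2 m.unpair.2.unpair.2.unpair.2)) m.unpair.2.unpair.1 with hC_def
  have hC : Computable₂ C := by
    rw [hC_def]
    have ha1 : Computable fun q : (ℕ × ℕ) × ℕ => q.1.1 := Computable.fst.comp Computable.fst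
    have ha2 : Computable fun q : (ℕ × ℕ) × ℕ => q.1.2 := Computable.snd.comp Computable.fst
    have hm : Computable fun q : (ℕ × ℕ) × ℕ => q.2 := Computable.snd
    have hup : Computable fun q : (ℕ × ℕ) × ℕ => q.2.unpair :=
      Primrec.unpair.to_comp.comp hm
    have hd : Computable fun q : (ℕ × ℕ) × ℕ => q.2.unpair.1 := Computable.fst.comp hup
    have hr : Computable fun q : (ℕ × ℕ) × ℕ => q.2.unpair.2 := Computable.snd.comp hup
    have hups : Computable fun q : (ℕ × ℕ) × ℕ => q.2.unpair.2.unpair :=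
      Primrec.unpair.to_comp.comp hr
    have hs : Computable fun q : (ℕ × ℕ) × ℕ => q.2.unpair.2.unpair.1 :=
      Computable.fst.comp hups
    have ht : Computable fun q : (ℕ × ℕ) × ℕ => q.2.unpair.2.unpair.2 :=
      Computable.snd.comp hups
    have hupt : Computable fun q : (ℕ × ℕ) × ℕ => q.2.unpair.2.unpair.2.unpair :=
      Primrec.unpair.to_comp.comp ht
    have hx : Computable fun q : (ℕ × ℕ) × ℕ => q.2.unpair.2.unpair.2.unpair.1 :=
      Computable.fst.comp hupt
    have hy : Computable fun q : (ℕ × ℕ) × ℕ => q.2.unpair.2.unpair.2.unpair.2 :=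
      Computable.snd.comp hupt
    have hD : Computable fun q : (ℕ × ℕ) × ℕ =>
        Denumerable.ofNat (Finset ℕ) q.2.unpair.1 := (Computable.ofNat (Finset ℕ)).comp hd
    have hL : Computable fun q : (ℕ × ℕ) × ℕ =>
        natList (Denumerable.ofNat (Finset ℕ) q.2.unpair.1) := natList_primrec.to_comp.comp hD
    have hM : Computable fun q : (ℕ × ℕ) × ℕ =>
        natList (f (Denumerable.ofNat (Finset ℕ) q.2.unpair.1)) :=
      natList_primrec.to_comp.comp (hfc.comp hD)
    have hlij : Computable fun q : (ℕ × ℕ) × ℕ => ([q.1.1, q.1.2] : List ℕ) :=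
      Primrec.list_cons.to_comp.comp ha1
        (Primrec.list_cons.to_comp.comp ha2 (Computable.const []))
    have hlji : Computable fun q : (ℕ × ℕ) × ℕ => ([q.1.2, q.1.1] : List ℕ) :=
      Primrec.list_cons.to_comp.comp ha2
        (Primrec.list_cons.to_comp.comp ha1 (Computable.const []))
    have hand : Computable₂ (· && ·) := (Primrec.dom_bool₂ (· && ·)).to_comp
    have hor : Computable₂ (· || ·) := (Primrec.dom_bool₂ (· || ·)).to_comp
    have hnot : Computable Bool.not := Primrec.not.to_comp
    have t1 : Computable fun q : (ℕ × ℕ) × ℕ => !decide (q.1.1 = q.1.2) :=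
      hnot.comp (Primrec.eq.decide.to_comp.comp ha1 ha2)
    have t2 : Computable fun q : (ℕ × ℕ) × ℕ =>
        ((decide (natList (Denumerable.ofNat (Finset ℕ) q.2.unpair.1) = [q.1.1, q.1.2])) ||
         (decide (natList (Denumerable.ofNat (Finset ℕ) q.2.unpair.1) = [q.1.2, q.1.1]))) :=
      hor.comp (Primrec.eq.decide.to_comp.comp hL hlij) (Primrec.eq.decide.to_comp.comp hL hlji)
    have t3 : Computable fun q : (ℕ × ℕ) × ℕ =>
        natMemb (natList (f (Denumerable.ofNat (Finset ℕ) q.2.unpair.1)))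
          q.2.unpair.2.unpair.2.unpair.1 := natMemb_primrec.to_comp.comp hM hx
    have t4 : Computable fun q : (ℕ × ℕ) × ℕ =>
        natMemb (natList (f (Denumerable.ofNat (Finset ℕ) q.2.unpair.1)))
          q.2.unpair.2.unpair.2.unpair.2 := natMemb_primrec.to_comp.comp hM hy
    have t5 : Computable fun q : (ℕ × ℕ) × ℕ =>
        !decide (q.2.unpair.2.unpair.2.unpair.1 = q.2.unpair.2.unpair.2.unpair.2) :=
      hnot.comp (Primrec.eq.decide.to_comp.comp hx hy)
    have t6 : Computable fun q : (ℕ × ℕ) × ℕ =>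
        st (Nat.pair (mul q.1.1 q.2.unpair.2.unpair.2.unpair.1)
          (mul q.1.2 q.2.unpair.2.unpair.2.unpair.2)) q.2.unpair.2.unpair.1 :=
      hst_prim.to_comp.comp
        (Primrec₂.natPair.to_comp.comp (hmulc.comp ha1 hx) (hmulc.comp ha2 hy)) hs
    exact hand.comp (hand.comp (hand.comp (hand.comp (hand.comp t1 t2) t3) t4) t5) t6
  have hre : REPred fun a : ℕ × ℕ => ∃ m, C a m = true := by
    refine (Partrec.rfind (hC.partrec₂)).dom_re.of_eq fun a => ?_
    rw [Nat.rfind_dom]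
    constructor
    · rintro ⟨m, hm, _⟩
      exact ⟨m, by simpa using hm⟩
    · rintro ⟨m, hm⟩
      exact ⟨m, by simpa using hm, fun {k} _ => trivial⟩
  have hiff : ∀ a : ℕ × ℕ, (¬ ν a.1 = ν a.2) ↔ ∃ m, C a m = true := by
    rintro ⟨i, j⟩
    simp only []
    constructor
    · intro hne
      have hij : i ≠ j := fun h => hne (by rw [h])
      have hDcard : ({i, j} : Finset ℕ).card = 2 := Finset.card_pair hij
      obtain ⟨⟨hSne, hfol⟩, hcard⟩ := hf {i, j} hDcard
      have hinj : Set.InjOn ν (f {i, j}) := Finset.card_image_iff.1 hcard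
      set S : Finset G := (f {i, j}).image ν with hS_def
      have hiD : ν i ∈ ({i, j} : Finset ℕ).image ν :=
        Finset.mem_image_of_mem ν (by simp)
      have hjD : ν j ∈ ({i, j} : Finset ℕ).image ν :=
        Finset.mem_image_of_mem ν (by simp)
      have h1 := hfol _ hiD
      have h2 := hfol _ hjD
      have hu : ∃ u ∈ S, u ∈ S.image (ν i * ·) ∧ u ∈ S.image (ν j * ·) := by
        by_contra hcon
        push_neg at hcon
        have hsub : S ⊆ (S \ S.image (ν i * ·)) ∪ (S \ S.image (ν j * ·)) := by
          intro u hu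
          by_cases hui : u ∈ S.image (ν i * ·)
          · exact Finset.mem_union_right _ (Finset.mem_sdiff.2 ⟨hu, hcon u hu hui⟩)
          · exact Finset.mem_union_left _ (Finset.mem_sdiff.2 ⟨hu, hui⟩)
        have hle := Finset.card_le_card hsub
        have hle2 := Finset.card_union_le (S \ S.image (ν i * ·)) (S \ S.image (ν j * ·))
        have hpos : 0 < S.card := Finset.card_pos.2 hSne
        have h4 : n * (S \ S.image (ν i * ·)).card + n * (S \ S.image (ν j * ·)).card ≤
            S.card + S.card := Nat.add_le_add h1 h2
        have h5 : n * S.card ≤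
            n * ((S \ S.image (ν i * ·)).card + (S \ S.image (ν j * ·)).card) :=
          Nat.mul_le_mul le_rfl (hle.trans hle2)
        rw [Nat.mul_add] at h5
        have h6 : 3 * S.card ≤ n * S.card := Nat.mul_le_mul hn le_rfl
        have h7 : 3 * S.card ≤ S.card + S.card := h6.trans (h5.trans h4)
        omega
      obtain ⟨u, huS, hui, huj⟩ := hu
      obtain ⟨vi, hviS, hvi⟩ := Finset.mem_image.1 hui
      obtain ⟨x, hxF, hxv⟩ := Finset.mem_image.1 hviS
      obtain ⟨vj, hvjS, hvj⟩ := Finset.mem_image.1 huj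
      obtain ⟨y, hyF, hyv⟩ := Finset.mem_image.1 hvjS
      have hmm : ν i * ν x = ν j * ν y := by
        rw [hxv, hyv]
        rw [hvi, hvj]
      have heq : ν (mul i x) = ν (mul j y) := by rw [hmulν, hmulν, hmm]
      have hxy : x ≠ y := by
        rintro rfl
        exact hne (mul_right_cancel hmm)
      obtain ⟨s, hs⟩ := (hkey (mul i x) (mul j y)).1 heq
      have hlist : natList ({i, j} : Finset ℕ) = [i, j] ∨
          natList ({i, j} : Finset ℕ) = [j, i] := by
        rcases hij.lt_or_gt with h | h
        · left
          exact sorted_eq_pair (natList_sorted _) h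
            (fun z => by rw [mem_natList]; simp)
        · right
          refine sorted_eq_pair (natList_sorted _) h (fun z => by rw [mem_natList]; simp; tauto)
      refine ⟨Nat.pair (@Encodable.encode (Finset ℕ) Primcodable.toEncodable
        ({i, j} : Finset ℕ)) (Nat.pair s (Nat.pair x y)), ?_⟩
      have hofn : Denumerable.ofNat (Finset ℕ)
          (@Encodable.encode (Finset ℕ) Primcodable.toEncodable ({i, j} : Finset ℕ)) =
          ({i, j} : Finset ℕ) := Denumerable.ofNat_encode _
      rw [hC_def]
      simp only [Nat.unpair_pair, hofn]
      rcases hlist with hl | hl <;>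
        simp [hl, hij, hxy, natMemb_iff, mem_natList, hxF, hyF, hs]
    · rintro ⟨m, hm⟩ hνeq
      rw [hC_def] at hm
      simp only [Bool.and_eq_true, Bool.or_eq_true, Bool.not_eq_true',
        decide_eq_true_eq, decide_eq_false_iff_not] at hm
      obtain ⟨⟨⟨⟨⟨hij, hlist⟩, hx⟩, hy⟩, hxy⟩, hst⟩ := hm
      set D' : Finset ℕ := Denumerable.ofNat (Finset ℕ) m.unpair.1 with hD'_def
      have hD' : D' = ({i, j} : Finset ℕ) := by
        ext z
        rw [← mem_natList]
        rcases hlist with h | h <;> simp [h] <;> tauto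
      have hDcard : D'.card = 2 := by rw [hD']; exact Finset.card_pair hij
      obtain ⟨⟨hSne, hfol⟩, hcard⟩ := hf D' hDcard
      have hinj : Set.InjOn ν (f D') := Finset.card_image_iff.1 hcard
      rw [natMemb_iff, mem_natList] at hx hy
      have heq : ν (mul i m.unpair.2.unpair.2.unpair.1)
          = ν (mul j m.unpair.2.unpair.2.unpair.2) := (hkey _ _).2 ⟨_, hst⟩
      rw [hmulν, hmulν, hνeq] at heq
      exact hxy (hinj hx hy (mul_left_cancel heq))
  refine ComputablePred.computable_iff_re_compl_re'.2 ⟨hce, ?_⟩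
  exact hre.of_eq fun a => (hiff a).symm
end

section
/- Let (G, ν) be a computable numbered group with ν injective. Then G is amenable (for every integer n ≥ 1 and every finite D ⊆ G there exists a (1/n)-Følner set with respect to D) if and only if (G, ν) admits a computable Følner sequence, i.e., a computable sequence (F_j)_{j∈ℕ} of nonempty finite subsets of ℕ such that for every g ∈ G, |ν(F_j) \ g·ν(F_j)| / |ν(F_j)| → 0 as j → ∞. -/
open Denumerable Encodable

section comp
variable {α β σ : Type} [Primcodable α] [Primcodable β] [Primcodable σ]

theorem comp_list_foldr {f : α → List β} {g : α → σ} {h : α → β × σ → σ}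
    (hf : Computable f) (hg : Computable g) (hh : Computable₂ h) :
    Computable fun a => (f a).foldr (fun b s => h a (b, s)) (g a) := by
  have step : Computable₂ fun (a : α) (p : ℕ × σ) =>
      Option.casesOn (motive := fun _ => σ) ((f a)[(f a).length - (p.1 + 1)]?) p.2 (fun b => h a (b, p.2)) := by
    apply Computable.option_casesOn
    · exact Computable.list_getElem?.comp (hf.comp Computable.fst)
        (Primrec.nat_sub.to_comp.comp
          ((Computable.list_length.comp hf).comp Computable.fst)
          (Computable.succ.comp (Computable.fst.comp Computable.snd)))
    · exact Computable.snd.comp Computable.snd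
    · exact hh.comp (Computable.fst.comp Computable.fst)
        (Computable.snd.pair ((Computable.snd.comp Computable.snd).comp Computable.fst))
  have main := Computable.nat_rec (Computable.list_length.comp hf) hg step
  refine main.of_eq fun a => ?_
  have key : ∀ k, k ≤ (f a).length →
      (Nat.rec (motive := fun _ => σ) (g a) (fun y IH =>
        Option.casesOn ((f a)[(f a).length - (y + 1)]?) IH (fun b => h a (b, IH))) k)
      = ((f a).drop ((f a).length - k)).foldr (fun b s => h a (b, s)) (g a) := by
    intro k hk
    induction k with
    | zero => simp
    | succ k ih =>
      have hk' : k ≤ (f a).length := Nat.le_of_succ_le hk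
      have hidx : (f a).length - (k + 1) < (f a).length := by omega
      have e1 : (f a).length - (k+1) + 1 = (f a).length - k := by omega
      have hdrop : (f a).drop ((f a).length - (k+1)) =
          (f a)[(f a).length - (k+1)] :: (f a).drop ((f a).length - k) := by
        rw [List.drop_eq_getElem_cons hidx, e1]
      simp only [ih hk', hdrop]
      rw [List.getElem?_eq_getElem hidx]
      rfl
  have := key (f a).length le_rfl
  simpa using this
end comp

section comp2
variable {α β σ : Type} [Primcodable α] [Primcodable β] [Primcodable σ]

theorem comp_list_map {f : α → List β} {g : α → β → σ}
    (hf : Computable f) (hg : Computable₂ g) :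
    Computable fun a => (f a).map (g a) := by
  have := comp_list_foldr (h := fun a (p : β × List σ) => g a p.1 :: p.2) hf
    (Computable.const ([] : List σ))
    (Computable.list_cons.comp (hg.comp Computable.fst (Computable.fst.comp Computable.snd))
      (Computable.snd.comp Computable.snd))
  refine this.of_eq fun a => ?_
  induction (f a) with
  | nil => rfl
  | cons b l ih => simp [ih]

theorem comp_list_filter {f : α → List β} {p : α → β → Bool}
    (hf : Computable f) (hp : Computable₂ p) :
    Computable fun a => (f a).filter (p a) := by
  have := comp_list_foldr (h := fun a (q : β × List β) => bif p a q.1 then q.1 :: q.2 else q.2) hf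
    (Computable.const ([] : List β))
    (Computable.cond (hp.comp Computable.fst (Computable.fst.comp Computable.snd))
      (Computable.list_cons.comp (Computable.fst.comp Computable.snd)
        (Computable.snd.comp Computable.snd))
      (Computable.snd.comp Computable.snd))
  refine this.of_eq fun a => ?_
  induction (f a) with
  | nil => rfl
  | cons b l ih => cases hb : p a b <;> simp [List.filter_cons, hb, ih]

theorem comp_list_all {f : α → List β} {p : α → β → Bool}
    (hf : Computable f) (hp : Computable₂ p) :
    Computable fun a => (f a).all (p a) := by
  have := comp_list_foldr (h := fun a (q : β × Bool) => bif p a q.1 then q.2 else false) hf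
    (Computable.const true)
    (Computable.cond (hp.comp Computable.fst (Computable.fst.comp Computable.snd))
      (Computable.snd.comp Computable.snd) (Computable.const false))
  refine this.of_eq fun a => ?_
  induction (f a) with
  | nil => rfl
  | cons b l ih =>
    simp only [List.all_cons, ← ih, List.foldr_cons]
    cases p a b <;> simp

theorem comp_decide_mem [DecidableEq β] {f : α → List β} {g : α → β}
    (hf : Computable f) (hg : Computable g) :
    Computable fun a => decide (g a ∈ f a) := by
  have := comp_list_foldr (h := fun a (q : β × Bool) => bif decide (g a = q.1) then true else q.2)
    hf (Computable.const false)
    (Computable.cond (Primrec.eq.decide.to_comp.comp (hg.comp Computable.fst)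
        (Computable.fst.comp Computable.snd))
      (Computable.const true) (Computable.snd.comp Computable.snd))
  refine this.of_eq fun a => ?_
  induction (f a) with
  | nil => simp
  | cons b l ih =>
    simp only [List.foldr_cons, ih, List.mem_cons]
    by_cases hb : g a = b <;> simp [hb]
end comp2

-- Nat.find computability
theorem comp_nat_find {α : Type} [Primcodable α] {p : α → ℕ → Bool} (hp : Computable₂ p)
    (H : ∀ a, ∃ n, p a n = true) : Computable fun a => Nat.find (H a) := by
  have h1 : Partrec fun a => Nat.rfind fun n => (Part.some (p a n)) :=
    Partrec.rfind (hp : Computable fun q : α × ℕ => p q.1 q.2).partrec.to₂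
  refine Partrec.of_eq_tot h1 fun a => ?_
  refine Nat.mem_rfind.2 ⟨?_, fun {m} hm => ?_⟩
  · simpa [Part.mem_some_iff] using (Nat.find_spec (H a)).symm
  · have h2 : p a m = false := Bool.eq_false_iff.mpr (Nat.find_min (H a) hm)
    simp [Part.mem_some_iff, h2]

-- raise' computable
theorem comp_raise' : Computable fun c : ℕ => Denumerable.raise' (Denumerable.ofNat (List ℕ) c) 0 := by
  have hfold : Primrec fun c : ℕ =>
      (Denumerable.ofNat (List ℕ) c).foldl
        (fun (s : ℕ × List ℕ) (m : ℕ) => (m + s.1 + 1, s.2 ++ [m + s.1])) (0, []) := by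
    apply Primrec.list_foldl (h := fun (_ : ℕ) (q : (ℕ × List ℕ) × ℕ) =>
        (q.2 + q.1.1 + 1, q.1.2 ++ [q.2 + q.1.1]))
      (Primrec.ofNat (List ℕ)) (Primrec.const (0, ([] : List ℕ)))
    have hadd : Primrec fun q : ℕ × (ℕ × List ℕ) × ℕ => q.2.2 + q.2.1.1 :=
      Primrec.nat_add.comp (Primrec.snd.comp Primrec.snd)
        ((Primrec.fst.comp Primrec.fst).comp Primrec.snd)
    exact ((Primrec.succ.comp hadd).pair
      (Primrec.list_concat.comp ((Primrec.snd.comp Primrec.fst).comp Primrec.snd) hadd)).to₂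
  have key : ∀ (l : List ℕ) (n : ℕ) (acc : List ℕ),
      (l.foldl (fun (s : ℕ × List ℕ) (m : ℕ) => (m + s.1 + 1, s.2 ++ [m + s.1])) (n, acc)).2
        = acc ++ Denumerable.raise' l n := by
    intro l
    induction l with
    | nil => intro n acc; simp [Denumerable.raise']
    | cons m l ih => intro n acc; simp [Denumerable.raise', ih]
  refine (Primrec.snd.comp hfold).to_comp.of_eq fun c => ?_
  simpa using key (Denumerable.ofNat (List ℕ) c) 0 []

def LofC (c : ℕ) : List ℕ := Denumerable.raise' (Denumerable.ofNat (List ℕ) c) 0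

def SofC (c : ℕ) : Finset ℕ := Denumerable.ofNat (Finset ℕ) c

theorem LofC_nodup (c : ℕ) : (LofC c).Nodup :=
  (Denumerable.raise'_sorted _ _).nodup

theorem mem_LofC (x c : ℕ) : x ∈ LofC c ↔ x ∈ SofC c := by
  rw [SofC, Denumerable.ofNat_of_decode (b := Finset.map ((Denumerable.eqv ℕ).symm.toEmbedding)
    (Denumerable.raise'Finset (Denumerable.ofNat (List ℕ) c) 0)) rfl]
  simp [Denumerable.raise'Finset, Finset.mem_map, Finset.mem_mk, LofC,
    show ∀ y : ℕ, (Denumerable.eqv ℕ) y = y from fun _ => rfl]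
  exact Iff.rfl

theorem toFinset_LofC (c : ℕ) : (LofC c).toFinset = SofC c := by
  ext x; simp [List.mem_toFinset, mem_LofC]

theorem length_LofC (c : ℕ) : (LofC c).length = (SofC c).card := by
  rw [← toFinset_LofC, List.toFinset_card_of_nodup (LofC_nodup c)]

def checkFn (mul : ℕ → ℕ → ℕ) (j c : ℕ) : Bool :=
  decide (0 < (LofC c).length) &&
  (List.range (j+1)).all fun i =>
    decide ((j+1) *
      ((LofC c).filter fun x => !decide (x ∈ (LofC c).map (mul i))).length ≤ (LofC c).length)

theorem checkFn_computable {mul : ℕ → ℕ → ℕ} (hmulc : Computable₂ mul) :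
    Computable₂ (checkFn mul) := by
  have hLofC : Computable LofC := comp_raise'
  have hL : Computable fun p : ℕ × ℕ => LofC p.2 := hLofC.comp Computable.snd
  have hA : Computable fun p : ℕ × ℕ => decide (0 < (LofC p.2).length) :=
    Primrec.nat_lt.decide.to_comp.comp (Computable.const 0) (Computable.list_length.comp hL)
  have hL' : Computable fun r : (ℕ × ℕ) × ℕ => LofC r.1.2 :=
    hLofC.comp (Computable.snd.comp Computable.fst)
  have hmapped : Computable fun r : (ℕ × ℕ) × ℕ => (LofC r.1.2).map (mul r.2) :=
    comp_list_map hL'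
      (Computable₂.mk (hmulc.comp (Computable.snd.comp Computable.fst) Computable.snd))
  have hmem : Computable fun w : ((ℕ × ℕ) × ℕ) × ℕ =>
      decide (w.2 ∈ (LofC w.1.1.2).map (mul w.1.2)) :=
    comp_decide_mem (hmapped.comp Computable.fst) Computable.snd
  have hnot : Computable fun w : ((ℕ × ℕ) × ℕ) × ℕ =>
      !decide (w.2 ∈ (LofC w.1.1.2).map (mul w.1.2)) := by
    refine (Computable.cond hmem (Computable.const false) (Computable.const true)).of_eq fun w => ?_
    cases h : decide (w.2 ∈ (LofC w.1.1.2).map (mul w.1.2)) <;> simp [h]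
  have hfilt : Computable fun r : (ℕ × ℕ) × ℕ =>
      (LofC r.1.2).filter fun x => !decide (x ∈ (LofC r.1.2).map (mul r.2)) :=
    comp_list_filter hL' (Computable₂.mk hnot)
  have hq : Computable fun r : (ℕ × ℕ) × ℕ => decide ((r.1.1 + 1) *
      ((LofC r.1.2).filter fun x => !decide (x ∈ (LofC r.1.2).map (mul r.2))).length
        ≤ (LofC r.1.2).length) :=
    Primrec.nat_le.decide.to_comp.comp
      (Primrec.nat_mul.to_comp.comp
        (Computable.succ.comp (Computable.fst.comp Computable.fst))
        (Computable.list_length.comp hfilt))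
      (Computable.list_length.comp hL')
  have hB : Computable fun p : ℕ × ℕ => (List.range (p.1 + 1)).all fun i =>
      decide ((p.1 + 1) *
        ((LofC p.2).filter fun x => !decide (x ∈ (LofC p.2).map (mul i))).length
          ≤ (LofC p.2).length) :=
    comp_list_all (Primrec.list_range.to_comp.comp (Computable.succ.comp Computable.fst))
      (Computable₂.mk hq)
  refine (Computable.cond hA hB (Computable.const false)).of_eq fun p => ?_
  simp only [checkFn]
  cases h : decide (0 < (LofC p.2).length) <;> simp [h]

theorem filter_length_eq (mul : ℕ → ℕ → ℕ) (i c : ℕ) :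
    ((LofC c).filter fun x => !decide (x ∈ (LofC c).map (mul i))).length
      = ((SofC c) \ (SofC c).image (mul i)).card := by
  have hnd : ((LofC c).filter fun x => !decide (x ∈ (LofC c).map (mul i))).Nodup :=
    (LofC_nodup c).filter _
  rw [← List.toFinset_card_of_nodup hnd]
  congr 1
  ext x
  simp only [List.mem_toFinset, List.mem_filter, Finset.mem_sdiff, Bool.not_eq_true',
    decide_eq_false_iff_not, mem_LofC, List.mem_map, Finset.mem_image]

theorem checkFn_iff (mul : ℕ → ℕ → ℕ) (j c : ℕ) : checkFn mul j c = true ↔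
    (SofC c).Nonempty ∧
      ∀ i < j + 1, (j + 1) * ((SofC c) \ (SofC c).image (mul i)).card ≤ (SofC c).card := by
  simp only [checkFn, Bool.and_eq_true, List.all_eq_true, List.mem_range, decide_eq_true_eq,
    filter_length_eq, length_LofC, Finset.card_pos]


open Filter Topology

theorem stmt4 (G : Type) [Group G] [DecidableEq G] (ν : ℕ → G)
    (hsurj : Function.Surjective ν) (hinj : Function.Injective ν)
    (mul : ℕ → ℕ → ℕ) (inv : ℕ → ℕ)
    (hmulc : Computable₂ mul) (hinvc : Computable inv)
    (hmulν : ∀ i j, ν (mul i j) = ν i * ν j) (hinvν : ∀ i, ν (inv i) = (ν i)⁻¹)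
    (hcomp : ComputablePred fun p : ℕ × ℕ => ν p.1 = ν p.2) :
    -- G is amenable
    (∀ n : ℕ, 1 ≤ n → ∀ D : Finset G, ∃ F : Finset G, IsFolner n D F)
    ↔
    -- (G, ν) admits a computable Følner sequence
    (∃ F : ℕ → Finset ℕ, Computable F ∧ (∀ j, (F j).Nonempty) ∧
      ∀ g : G, Tendsto
        (fun j : ℕ => ((((F j).image ν) \ (((F j).image ν).image (g * ·))).card : ℝ) /
          ((F j).image ν).card)
        atTop (nhds 0)) := by
  let e : ℕ ≃ G := Equiv.ofBijective ν ⟨hinj, hsurj⟩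
  have heν : ∀ x, e x = ν x := fun _ => rfl
  have hcard : ∀ S : Finset ℕ, (S.image ν).card = S.card :=
    fun S => Finset.card_image_of_injective S hinj
  have key : ∀ (S : Finset ℕ) (i : ℕ),
      (S.image ν \ (S.image ν).image (fun g => ν i * g)).card
        = (S \ S.image (mul i)).card := by
    intro S i
    have h2 : (S.image ν).image (fun g => ν i * g) = (S.image (mul i)).image ν := by
      rw [Finset.image_image, Finset.image_image]
      exact Finset.image_congr fun x _ => (hmulν i x).symm
    rw [h2, ← Finset.image_sdiff S _ hinj, hcard]
  constructor
  · intro amen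
    have htot : ∀ j : ℕ, ∃ c : ℕ, checkFn mul j c = true := by
      intro j
      obtain ⟨Fg, hFg⟩ := amen (j + 1) (by omega) ((Finset.range (j + 1)).image ν)
      refine ⟨Denumerable.eqv (Finset ℕ) (Fg.image fun g => e.symm g), ?_⟩
      rw [checkFn_iff]
      have hS : SofC (Denumerable.eqv (Finset ℕ) (Fg.image fun g => e.symm g))
          = Fg.image fun g => e.symm g :=
        show Denumerable.ofNat (Finset ℕ) _ = _ from Denumerable.ofNat_encode _
      rw [hS]
      have hνS : (Fg.image fun g => e.symm g).image ν = Fg := by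
        ext g
        simp only [Finset.image_image, Finset.mem_image, Function.comp]
        constructor
        · rintro ⟨y, hy, rfl⟩
          rw [← heν, e.apply_symm_apply]; exact hy
        · intro hg
          exact ⟨g, hg, by rw [← heν, e.apply_symm_apply]⟩
      constructor
      · exact hFg.1.image _
      · intro i hi
        have hx : ν i ∈ (Finset.range (j + 1)).image ν :=
          Finset.mem_image_of_mem ν (Finset.mem_range.2 hi)
        have := hFg.2 (ν i) hx
        rw [← hcard (Fg.image fun g => e.symm g), ← key, hνS]
        exact this
    have hfcomp : Computable fun j => Nat.find (htot j) :=
      comp_nat_find (checkFn_computable hmulc) htot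
    refine ⟨fun j => SofC (Nat.find (htot j)),
      (Computable.ofNat (Finset ℕ)).comp hfcomp, ?_, ?_⟩
    · intro j
      exact ((checkFn_iff mul j _).1 (Nat.find_spec (htot j))).1
    · intro g
      obtain ⟨i, rfl⟩ := hsurj g
      apply squeeze_zero' (g := fun j : ℕ => 1 / ((j : ℝ) + 1))
      · exact Eventually.of_forall fun j => by positivity
      · refine eventually_atTop.2 ⟨i, fun j hj => ?_⟩
        set S := SofC (Nat.find (htot j)) with hSdef
        obtain ⟨hne, hbound⟩ := (checkFn_iff mul j _).1 (Nat.find_spec (htot j))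
        have hb := hbound i (by omega)
        have hpos : (0 : ℝ) < (S.card : ℝ) := by
          exact_mod_cast Finset.card_pos.2 hne
        have hAB : (((S.image ν) \ (S.image ν).image (fun x => ν i * x)).card : ℝ)
            / ((S.image ν).card : ℝ) = ((S \ S.image (mul i)).card : ℝ) / (S.card : ℝ) := by
          rw [key, hcard]
        rw [hAB, div_le_div_iff₀ hpos (by positivity)]
        calc ((S \ S.image (mul i)).card : ℝ) * ((j : ℝ) + 1)
            = (((j + 1) * (S \ S.image (mul i)).card : ℕ) : ℝ) := by push_cast; ring
          _ ≤ ((S.card : ℕ) : ℝ) := by exact_mod_cast hb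
          _ = 1 * (S.card : ℝ) := by ring
      · exact tendsto_one_div_add_atTop_nhds_zero_nat
  · rintro ⟨F, hFc, hFne, htend⟩ n hn D
    have hev : ∀ᶠ j in atTop, ∀ x ∈ D, ((((F j).image ν) \ (((F j).image ν).image
        (x * ·))).card : ℝ) / ((F j).image ν).card < 1 / n := by
      rw [eventually_all_finset]
      intro x _
      exact (htend x).eventually_lt_const (by positivity)
    obtain ⟨j, hj⟩ := hev.exists
    refine ⟨(F j).image ν, (hFne j).image _, ?_⟩
    intro x hx
    have hr := hj x hx
    have hpos : (0 : ℝ) < ((F j).image ν).card := by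
      have : ((F j).image ν).Nonempty := (hFne j).image _
      exact_mod_cast Finset.card_pos.2 this
    rw [div_lt_div_iff₀ hpos (by positivity)] at hr
    have : ((n : ℝ) * ((((F j).image ν) \ (((F j).image ν).image (x * ·))).card : ℝ))
        < ((F j).image ν).card := by
      calc (n : ℝ) * ((((F j).image ν) \ (((F j).image ν).image (x * ·))).card : ℝ)
          = ((((F j).image ν) \ (((F j).image ν).image (x * ·))).card : ℝ) * n := by ring
        _ < 1 * (((F j).image ν).card : ℝ) := hr
        _ = (((F j).image ν).card : ℝ) := by ring
    exact_mod_cast this.le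
end

section
/- For every total computable function f : ℕ → ℕ there exists a computable function x₀ : ℤ → {0,1} such that, setting m_j(x₀) = (∑_{i=−j}^{j} x₀(i)) / (2j+1) for j ∈ ℕ: (a) m_j(x₀) → 0 as j → ∞; and (b) for every integer k ≥ 1 there exists j > f(k) with m_j(x₀) ≥ 1/k. -/
open Filter Topology

/-- The mean over the Følner set `F_j = {-j, …, j}` of `ℤ` applied to `x : ℤ → {0,1}`:
`m_j(x) = (∑_{i=-j}^{j} x(i)) / (2j+1)`. -/
noncomputable def folnerMean (x : ℤ → Bool) (j : ℕ) : ℝ :=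
  (∑ i ∈ Finset.Icc (-(j : ℤ)) (j : ℤ), (if x i then (1 : ℝ) else 0)) / (2 * j + 1)

namespace Stmt7Aux

variable (f : ℕ → ℕ)

def J : ℕ → ℕ
  | 0 => 0
  | k + 1 => (k + 1) * (max (2 * J k + 1) (f (k + 1)) + 1)

def N (k : ℕ) : ℕ := max (2 * J f k + 1) (f (k + 1)) + 1

theorem J_succ (k : ℕ) : J f (k + 1) = (k + 1) * N f k := rfl

def gstep (a : ℕ) (p : ℕ × Bool) : Bool :=
  p.2 || (decide (p.1 * N f p.1 ≤ a) && decide (a ≤ (p.1 + 1) * N f p.1))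

def g (n : ℕ) : Bool :=
  Nat.rec (motive := fun _ => Bool) false (fun y IH => gstep f n (y, IH)) (Nat.succ n)

def Jstep (a : ℕ) (p : ℕ × ℕ) : ℕ := (p.1 + 1) * (max (2 * p.2 + 1) (f (p.1 + 1)) + 1)


theorem N_ge (k : ℕ) : 2 * J f k + 2 ≤ N f k := by
  have : 2 * J f k + 1 ≤ max (2 * J f k + 1) (f (k + 1)) := le_max_left _ _
  simp only [N]; omega

theorem f_le_N (k : ℕ) : f (k + 1) + 1 ≤ N f k := by
  have : f (k + 1) ≤ max (2 * J f k + 1) (f (k + 1)) := le_max_right _ _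
  simp only [N]; omega

theorem N_pos (k : ℕ) : 0 < N f k := by have := N_ge f k; omega

theorem J_lt_J_succ (k : ℕ) : J f k < J f (k + 1) := by
  rw [J_succ]
  have h1 := N_ge f k
  have h2 : N f k ≤ (k + 1) * N f k := Nat.le_mul_of_pos_left _ (by omega)
  omega

theorem J_strictMono : StrictMono (J f) := strictMono_nat_of_lt_succ (J_lt_J_succ f)

theorem le_J (k : ℕ) : k ≤ J f k := (J_strictMono f).le_apply

theorem rec_iff (n m : ℕ) :
    (Nat.rec (motive := fun _ => Bool) false (fun y IH => gstep f n (y, IH)) m = true) ↔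
      ∃ k < m, k * N f k ≤ n ∧ n ≤ (k + 1) * N f k := by
  induction m with
  | zero => simp
  | succ m ih =>
    show (gstep f n (m, _) = true) ↔ _
    rw [gstep]
    simp only [Bool.or_eq_true, Bool.and_eq_true, decide_eq_true_eq, ih]
    constructor
    · rintro (⟨k, hk, h⟩ | h)
      · exact ⟨k, by omega, h⟩
      · exact ⟨m, by omega, h⟩
    · rintro ⟨k, hk, h⟩
      rcases Nat.lt_succ_iff_lt_or_eq.1 hk with hk | rfl
      · exact Or.inl ⟨k, hk, h⟩
      · exact Or.inr h

theorem g_iff (n : ℕ) : g f n = true ↔ ∃ k, k * N f k ≤ n ∧ n ≤ (k + 1) * N f k := by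
  rw [show (g f n = true) ↔ _ from rec_iff f n (Nat.succ n)]
  constructor
  · rintro ⟨k, _, h⟩; exact ⟨k, h⟩
  · rintro ⟨k, h1, h2⟩
    refine ⟨k, ?_, h1, h2⟩
    have : k ≤ k * N f k := Nat.le_mul_of_pos_right _ (N_pos f k)
    omega

theorem g_block {k n : ℕ} (h1 : k * N f k ≤ n) (h2 : n ≤ (k + 1) * N f k) : g f n = true :=
  (g_iff f n).2 ⟨k, h1, h2⟩

theorem g_zero : g f 0 = true :=
  g_block f (k := 0) (by simp) (by simp)

theorem g_gap {k n : ℕ} (hk : 1 ≤ k) (h1 : J f k < n) (h2 : n < k * N f k) : g f n = false := by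
  by_contra h
  rw [Bool.not_eq_false, g_iff] at h
  obtain ⟨m, hm1, hm2⟩ := h
  rcases lt_trichotomy m k with h | rfl | h
  · -- m < k : (m+1) * N f m = J f (m+1) ≤ J f k < n
    have : J f (m + 1) ≤ J f k := (J_strictMono f).monotone (by omega)
    rw [J_succ] at this
    omega
  · omega
  · -- m > k : n < k * N f k ≤ J f (k+1) ≤ J f m < N f m ≤ m * N f m
    have hJm : J f (k + 1) ≤ J f m := (J_strictMono f).monotone (by omega)
    have h3 : k * N f k ≤ J f (k + 1) := by
      rw [J_succ]; exact Nat.mul_le_mul_right _ (by omega)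
    have h4 := N_ge f m
    have h5 : N f m ≤ m * N f m := Nat.le_mul_of_pos_left _ (by omega)
    omega

def Sc (j : ℕ) : ℕ := ∑ n ∈ Finset.range (j + 1), (if g f n then 1 else 0)

theorem Sc_le (j : ℕ) : Sc f j ≤ j + 1 := by
  calc Sc f j ≤ ∑ _n ∈ Finset.range (j + 1), 1 :=
        Finset.sum_le_sum fun n _ => by split <;> omega
    _ = j + 1 := by simp

theorem Sc_pos (j : ℕ) : 1 ≤ Sc f j := by
  have h0 : (0 : ℕ) ∈ Finset.range (j + 1) := by simp
  have := Finset.single_le_sum (f := fun n => if g f n then 1 else 0)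
    (fun n _ => Nat.zero_le _) h0
  simp only [g_zero, if_true] at this
  simpa [Sc] using this

theorem Sc_diff {a b : ℕ} (h : a ≤ b) :
    Sc f b = Sc f a + ∑ n ∈ Finset.Ico (a + 1) (b + 1), (if g f n then 1 else 0) := by
  rw [Sc, Sc, Finset.range_eq_Ico]
  rw [← Finset.sum_Ico_consecutive (fun n => if g f n then 1 else 0) (Nat.zero_le (a + 1))
    (show a + 1 ≤ b + 1 by omega)]
  rw [Finset.range_eq_Ico]

theorem Sc_gap {k j : ℕ} (hk : 1 ≤ k) (h1 : J f k ≤ j) (h2 : j < k * N f k) :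
    Sc f j = Sc f (J f k) := by
  rw [Sc_diff f h1, Finset.sum_eq_zero, add_zero]
  intro n hn
  rw [Finset.mem_Ico] at hn
  simp [g_gap f hk (show J f k < n by omega) (show n < k * N f k by omega)]

theorem Sc_block_lower (k : ℕ) : N f k + 1 ≤ Sc f (J f (k + 1)) := by
  have hsub : Finset.Ico (k * N f k) ((k + 1) * N f k + 1) ⊆ Finset.range (J f (k + 1) + 1) := by
    rw [Finset.range_eq_Ico, J_succ]
    exact Finset.Ico_subset_Ico (Nat.zero_le _) le_rfl
  have hall : ∀ n ∈ Finset.Ico (k * N f k) ((k + 1) * N f k + 1),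
      (if g f n then (1 : ℕ) else 0) = 1 := by
    intro n hn
    rw [Finset.mem_Ico] at hn
    simp [g_block f (k := k) (show k * N f k ≤ n by omega) (show n ≤ (k + 1) * N f k by omega)]
  have hmul : (k + 1) * N f k = k * N f k + N f k := by ring
  calc N f k + 1 = ∑ n ∈ Finset.Ico (k * N f k) ((k + 1) * N f k + 1), (if g f n then 1 else 0) := by
        rw [Finset.sum_congr rfl hall, Finset.sum_const, Nat.card_Ico, smul_eq_mul, mul_one]
        omega
    _ ≤ Sc f (J f (k + 1)) := Finset.sum_le_sum_of_subset hsub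

theorem Sc_J1 : Sc f (J f 1) = J f 1 + 1 := by
  have hall : ∀ n ∈ Finset.range (J f 1 + 1), (if g f n then (1 : ℕ) else 0) = 1 := by
    intro n hn
    rw [Finset.mem_range] at hn
    have h1 : J f 1 = 1 * N f 0 := J_succ f 0
    have h0 : (0 : ℕ) * N f 0 ≤ n := by simp
    simp [g_block f (k := 0) h0 (show n ≤ (0 + 1) * N f 0 by omega)]
  rw [Sc, Finset.sum_congr rfl hall, Finset.sum_const, smul_eq_mul, mul_one, Finset.card_range]

theorem Sc_upper {k j : ℕ} (hk : 1 ≤ k) (hj : k * N f k ≤ j) :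
    Sc f j ≤ (J f k + 1) + (j + 1 - k * N f k) := by
  have hN := N_ge f k
  have hNk : N f k ≤ k * N f k := Nat.le_mul_of_pos_left _ (by omega)
  have h1 : J f k ≤ k * N f k - 1 := by omega
  have h2 : Sc f (k * N f k - 1) = Sc f (J f k) := Sc_gap f hk h1 (by omega)
  have h3 : k * N f k - 1 ≤ j := by omega
  rw [Sc_diff f h3, h2]
  have h4 : ∑ n ∈ Finset.Ico (k * N f k - 1 + 1) (j + 1), (if g f n then 1 else 0) ≤
      j + 1 - k * N f k := by
    calc _ ≤ ∑ _n ∈ Finset.Ico (k * N f k - 1 + 1) (j + 1), 1 :=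
          Finset.sum_le_sum fun n _ => by split <;> omega
      _ = j + 1 - k * N f k := by rw [Finset.sum_const, Nat.card_Ico, smul_eq_mul, mul_one]; omega
  have h5 := Sc_le f (J f k)
  omega

theorem f_lt_J (k : ℕ) (hk : 1 ≤ k) : f k < J f k := by
  obtain ⟨m, rfl⟩ : ∃ m, k = m + 1 := ⟨k - 1, by omega⟩
  have h1 := f_le_N f m
  have h2 : N f m ≤ (m + 1) * N f m := Nat.le_mul_of_pos_left _ (by omega)
  rw [J_succ]; omega

theorem Sc_J_succ_le (m : ℕ) : Sc f (J f (m + 1)) ≤ 2 * N f m := by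
  cases m with
  | zero =>
    rw [Sc_J1]
    have h1 : J f 1 = 1 * N f 0 := J_succ f 0
    have h2 := N_ge f 0
    omega
  | succ m =>
    show Sc f (J f (m + 2)) ≤ 2 * N f (m + 1)
    have hNpos : 0 < N f (m + 1) := by have := N_ge f (m + 1); omega
    have hj : (m + 1) * N f (m + 1) ≤ J f (m + 2) := by
      rw [J_succ]; exact Nat.mul_le_mul_right _ (by omega)
    have h := Sc_upper f (k := m + 1) (j := J f (m + 2)) (by omega) hj
    have hJ2 : J f (m + 2) = (m + 2) * N f (m + 1) := J_succ f (m + 1)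
    have hmul : (m + 2) * N f (m + 1) = (m + 1) * N f (m + 1) + N f (m + 1) := by ring
    have hsub : J f (m + 2) + 1 - (m + 1) * N f (m + 1) = N f (m + 1) + 1 := by
      rw [hJ2, hmul]; omega
    have hge := N_ge f (m + 1)
    omega

def x0 : ℤ → Bool := fun i => g f i.natAbs

theorem sum_Icc_eq (j : ℕ) :
    (∑ i ∈ Finset.Icc (-(j : ℤ)) (j : ℤ), (if g f i.natAbs then (1 : ℝ) else 0)) =
      2 * (Sc f j : ℝ) - 1 := by
  induction j with
  | zero =>
    have h1 : Sc f 0 = 1 := by simp [Sc, Finset.filter_singleton, g_zero]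
    rw [h1]
    norm_num [Finset.filter_singleton, g_zero]
  | succ j ih =>
    have hset : Finset.Icc (-((j : ℤ) + 1)) ((j : ℤ) + 1) =
        insert (-((j : ℤ) + 1)) (insert ((j : ℤ) + 1) (Finset.Icc (-(j : ℤ)) (j : ℤ))) := by
      ext x
      simp only [Finset.mem_Icc, Finset.mem_insert]
      omega
    have h1 : (-((j : ℤ) + 1)) ∉ insert ((j : ℤ) + 1) (Finset.Icc (-(j : ℤ)) (j : ℤ)) := by
      simp only [Finset.mem_insert, Finset.mem_Icc]
      omega
    have h2 : ((j : ℤ) + 1) ∉ Finset.Icc (-(j : ℤ)) (j : ℤ) := by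
      simp only [Finset.mem_Icc]; omega
    have hcast : (((j : ℕ) + 1 : ℕ) : ℤ) = (j : ℤ) + 1 := by push_cast; ring
    rw [show (-(((j : ℕ) + 1 : ℕ) : ℤ)) = -((j : ℤ) + 1) by rw [hcast],
      show ((((j : ℕ) + 1 : ℕ)) : ℤ) = ((j : ℤ) + 1) from hcast]
    rw [hset, Finset.sum_insert h1, Finset.sum_insert h2, ih]
    have hb1 : (-((j : ℤ) + 1)).natAbs = j + 1 := by omega
    have hb2 : ((j : ℤ) + 1).natAbs = j + 1 := by omega
    rw [hb1, hb2]
    have hS : Sc f (j + 1) = Sc f j + (if g f (j + 1) then 1 else 0) := by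
      rw [Sc, Sc, Finset.sum_range_succ]
    rw [hS]
    push_cast
    split <;> ring

theorem mean_eq (j : ℕ) :
    folnerMean (x0 f) j = (2 * (Sc f j : ℝ) - 1) / (2 * j + 1) := by
  simp only [folnerMean, x0]
  exact congrArg (fun s => s / (2 * (j : ℝ) + 1)) (sum_Icc_eq f j)

theorem num_nonneg (j : ℕ) : (0 : ℝ) ≤ 2 * (Sc f j : ℝ) - 1 := by
  have := Sc_pos f j
  have : (1 : ℝ) ≤ (Sc f j : ℝ) := by exact_mod_cast this
  linarith

theorem denom_pos (j : ℕ) : (0 : ℝ) < 2 * (j : ℝ) + 1 := by positivity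

theorem mean_nonneg (j : ℕ) : 0 ≤ folnerMean (x0 f) j := by
  rw [mean_eq]; exact div_nonneg (num_nonneg f j) (denom_pos j).le

theorem mean_J_lower (k : ℕ) (hk : 1 ≤ k) : (1 / k : ℝ) ≤ folnerMean (x0 f) (J f k) := by
  obtain ⟨m, rfl⟩ : ∃ m, k = m + 1 := ⟨k - 1, by omega⟩
  rw [mean_eq]
  rw [show ((m + 1 : ℕ) : ℝ) = (m : ℝ) + 1 by push_cast; ring]
  have hS := Sc_block_lower f m
  have hJ : J f (m + 1) = (m + 1) * N f m := J_succ f m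
  have hkpos : (0 : ℝ) < (m : ℝ) + 1 := by positivity
  rw [div_le_div_iff₀ hkpos (denom_pos _)]
  have hSr : ((N f m : ℝ) + 1) ≤ (Sc f (J f (m + 1)) : ℝ) := by exact_mod_cast hS
  have hJr : (J f (m + 1) : ℝ) = ((m : ℝ) + 1) * (N f m : ℝ) := by exact_mod_cast hJ
  have hNr : (0 : ℝ) ≤ (N f m : ℝ) := by positivity
  nlinarith [hSr, hJr]

theorem mean_J_upper (m : ℕ) : folnerMean (x0 f) (J f (m + 1)) ≤ 2 / (m + 1 : ℝ) := by
  rw [mean_eq]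
  have hS := Sc_J_succ_le f m
  have hJ : J f (m + 1) = (m + 1) * N f m := J_succ f m
  have hkpos : (0 : ℝ) < (m : ℝ) + 1 := by positivity
  rw [div_le_div_iff₀ (denom_pos _) hkpos]
  have hSr : (Sc f (J f (m + 1)) : ℝ) ≤ 2 * (N f m : ℝ) := by exact_mod_cast hS
  have hJr : (J f (m + 1) : ℝ) = ((m : ℝ) + 1) * (N f m : ℝ) := by exact_mod_cast hJ
  have hNr : (0 : ℝ) ≤ (N f m : ℝ) := by positivity
  nlinarith [hSr, hJr]

theorem mean_le (k : ℕ) (hk : 1 ≤ k) (j : ℕ) (hj : J f k < j) :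
    folnerMean (x0 f) j ≤ 3 / k := by
  have hex : ∃ t, j ≤ J f t := ⟨j, le_J f j⟩
  have ht0 := Nat.find_spec hex
  set t0 := Nat.find hex with ht0def
  clear_value t0
  have ht0k : k + 1 ≤ t0 := by
    by_contra h
    have : t0 ≤ k := by omega
    have := (J_strictMono f).monotone this
    omega
  obtain ⟨m, rfl⟩ : ∃ m, t0 = m + 1 := ⟨t0 - 1, by omega⟩
  have hm1 : 1 ≤ m := by omega
  have hkm : k ≤ m := by omega
  have hJmj : J f m < j := by
    have := Nat.find_min hex (m := m) (by omega)
    omega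
  have hjJ : j ≤ J f (m + 1) := ht0
  have hmain : folnerMean (x0 f) j ≤ 3 / (m : ℝ) := by
    have hmpos : (0 : ℝ) < (m : ℝ) := by exact_mod_cast hm1
    rcases lt_or_ge j (m * N f m) with hcase | hcase
    · -- gap : Sc f j = Sc f (J f m)
      have hSc : Sc f j = Sc f (J f m) := Sc_gap f hm1 hJmj.le hcase
      rw [mean_eq, hSc]
      have step1 : (2 * (Sc f (J f m) : ℝ) - 1) / (2 * (j : ℝ) + 1) ≤
          (2 * (Sc f (J f m) : ℝ) - 1) / (2 * (J f m : ℝ) + 1) := by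
        apply div_le_div_of_nonneg_left (num_nonneg f (J f m)) (denom_pos (J f m))
        have : (J f m : ℝ) ≤ (j : ℝ) := by exact_mod_cast hJmj.le
        linarith
      refine step1.trans ?_
      obtain ⟨m', rfl⟩ : ∃ m', m = m' + 1 := ⟨m - 1, by omega⟩
      have h2 := mean_J_upper f m'
      rw [mean_eq] at h2
      refine h2.trans ?_
      rw [div_le_div_iff₀ (by positivity) hmpos]
      push_cast
      nlinarith
    · -- block : use Sc_upper
      have hS := Sc_upper f hm1 hcase
      rw [mean_eq, div_le_div_iff₀ (denom_pos j) hmpos]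
      have hd : j + 1 - m * N f m = j + 1 - m * N f m := rfl
      set d := j + 1 - m * N f m with hddef
      have hdj : j + 1 = m * N f m + d := by omega
      have hjub : j ≤ (m + 1) * N f m := by rw [← J_succ]; exact hjJ
      have hdub : d ≤ N f m + 1 := by
        have : (m + 1) * N f m = m * N f m + N f m := by ring
        omega
      have hge := N_ge f m
      -- cast everything
      have hSr : (Sc f j : ℝ) ≤ (J f m : ℝ) + 1 + (d : ℝ) := by exact_mod_cast hS
      have hAr : (J f m : ℝ) + 2 ≤ (N f m : ℝ) := by
        have : J f m + 2 ≤ N f m := by omega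
        exact_mod_cast this
      have hdr : (d : ℝ) ≤ (N f m : ℝ) + 1 := by exact_mod_cast hdub
      have hjr : (m : ℝ) * (N f m : ℝ) + (d : ℝ) = (j : ℝ) + 1 := by exact_mod_cast hdj.symm
      have hmr : (1 : ℝ) ≤ (m : ℝ) := by exact_mod_cast hm1
      have hd0 : (0 : ℝ) ≤ (d : ℝ) := by positivity
      have hN0 : (0 : ℝ) ≤ (N f m : ℝ) := by positivity
      have hkey : (2 * (Sc f j : ℝ) - 1) * m ≤ (2 * ((J f m : ℝ) + 1 + d) - 1) * m := by
        apply mul_le_mul_of_nonneg_right _ (by linarith)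
        linarith
      refine hkey.trans ?_
      nlinarith [mul_le_mul_of_nonneg_left hAr (show (0:ℝ) ≤ m by linarith),
        mul_le_mul_of_nonneg_left hdr (show (0:ℝ) ≤ m by linarith)]
  refine hmain.trans ?_
  have hkr : (0 : ℝ) < (k : ℝ) := by exact_mod_cast hk
  have hmr : (k : ℝ) ≤ (m : ℝ) := by exact_mod_cast hkm
  exact div_le_div_of_nonneg_left (by norm_num) hkr hmr

theorem mean_tendsto : Tendsto (fun j : ℕ => folnerMean (x0 f) j) atTop (nhds 0) := by
  rw [Metric.tendsto_atTop]
  intro ε hε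
  obtain ⟨k, hk⟩ := exists_nat_gt (3 / ε)
  refine ⟨J f (k + 1) + 1, fun j hj => ?_⟩
  rw [Real.dist_eq, sub_zero, abs_of_nonneg (mean_nonneg f j)]
  have h1 : folnerMean (x0 f) j ≤ 3 / (k + 1 : ℝ) := by
    have := mean_le f (k + 1) (by omega) j (by omega)
    simpa using this
  refine lt_of_le_of_lt h1 ?_
  rw [div_lt_iff₀ (by positivity)]
  have hk1 : (3 / ε) < (k : ℝ) + 1 := by
    refine hk.trans_le ?_; linarith
  calc (3 : ℝ) = (3 / ε) * ε := by field_simp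
    _ < ((k : ℝ) + 1) * ε := by
        apply mul_lt_mul_of_pos_right hk1 hε
    _ = ε * ((k : ℝ) + 1) := by ring

theorem computable_J (hf : Computable f) : Computable (J f) := by
  have hstep : Computable₂ (Jstep f) := by
    have h0 : Computable fun x : ℕ × (ℕ × ℕ) => Jstep f x.1 x.2 := by
      simp only [Jstep]
      have h1 : Computable fun x : ℕ × (ℕ × ℕ) => x.2.1 + 1 :=
      Computable.succ.comp (Computable.fst.comp Computable.snd)
      have h2 : Computable fun x : ℕ × (ℕ × ℕ) => 2 * x.2.2 + 1 :=
      Computable.succ.comp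
        (Primrec.nat_mul.to_comp.comp (Computable.const 2)
          (Computable.snd.comp Computable.snd))
      have h3 : Computable fun x : ℕ × (ℕ × ℕ) => max (2 * x.2.2 + 1) (f (x.2.1 + 1)) + 1 :=
      Computable.succ.comp (Primrec.nat_max.to_comp.comp h2 (hf.comp h1))
      exact Primrec.nat_mul.to_comp.comp h1 h3
    exact h0.to₂
  have h := Computable.nat_rec (f := fun n : ℕ => n) Computable.id (Computable.const 0) hstep
  refine h.of_eq fun n => ?_
  induction n with
  | zero => rfl
  | succ k ih => simp only [J]; rw [← ih]; rfl

theorem computable_N (hf : Computable f) : Computable (N f) := by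
  have h1 : Computable fun k : ℕ => 2 * J f k + 1 :=
    Computable.succ.comp (Primrec.nat_mul.to_comp.comp (Computable.const 2) (computable_J f hf))
  exact Computable.succ.comp (Primrec.nat_max.to_comp.comp h1 (hf.comp Computable.succ))

theorem computable_g (hf : Computable f) : Computable (g f) := by
  have hN := computable_N f hf
  have hstep : Computable₂ (gstep f) := by
    have h0 : Computable fun x : ℕ × (ℕ × Bool) => gstep f x.1 x.2 := by
      simp only [gstep]
      have hk : Computable fun x : ℕ × (ℕ × Bool) => x.2.1 :=
      Computable.fst.comp Computable.snd
      have ha : Computable fun x : ℕ × (ℕ × Bool) => x.1 := Computable.fst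
      have hNk : Computable fun x : ℕ × (ℕ × Bool) => N f x.2.1 := hN.comp hk
      have hd1 : Computable fun x : ℕ × (ℕ × Bool) => decide (x.2.1 * N f x.2.1 ≤ x.1) :=
      Primrec.nat_le.decide.to_comp.comp (Primrec.nat_mul.to_comp.comp hk hNk) ha
      have hd2 : Computable fun x : ℕ × (ℕ × Bool) => decide (x.1 ≤ (x.2.1 + 1) * N f x.2.1) :=
      Primrec.nat_le.decide.to_comp.comp ha
        (Primrec.nat_mul.to_comp.comp (Computable.succ.comp hk) hNk)
      exact Primrec.or.to_comp.comp (Computable.snd.comp Computable.snd)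
        (Primrec.and.to_comp.comp hd1 hd2)
    exact h0.to₂
  exact Computable.nat_rec Computable.succ (Computable.const false) hstep

theorem primrec_natAbs : Primrec (Int.natAbs) := by
  have h : Primrec fun i : ℤ =>
      (if Encodable.encode i % 2 = 0 then Encodable.encode i / 2 else Encodable.encode i / 2 + 1) := by
    apply Primrec.ite
    · exact PrimrecRel.comp Primrec.eq
        (Primrec.nat_mod.comp Primrec.encode (Primrec.const 2)) (Primrec.const 0)
    · exact Primrec.nat_div.comp Primrec.encode (Primrec.const 2)
    · exact Primrec.succ.comp (Primrec.nat_div.comp Primrec.encode (Primrec.const 2))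
  refine h.of_eq fun i => ?_
  cases i with
  | ofNat n =>
    have he : Encodable.encode (Int.ofNat n) = 2 * n := rfl
    rw [he]
    simp [Nat.mul_div_cancel_left, Nat.mul_mod_right]
  | negSucc n =>
    have he : Encodable.encode (Int.negSucc n) = 2 * n + 1 := rfl
    rw [he]
    have h2 : (2 * n + 1) % 2 = 1 := by omega
    have h3 : (2 * n + 1) / 2 = n := by omega
    simp [h2, h3]

end Stmt7Aux

theorem stmt7 (f : ℕ → ℕ) (hf : Computable f) :
    ∃ x₀ : ℤ → Bool, Computable x₀ ∧
      Tendsto (fun j : ℕ => folnerMean x₀ j) atTop (nhds 0) ∧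
      ∀ k : ℕ, 1 ≤ k → ∃ j : ℕ, f k < j ∧ (1 / k : ℝ) ≤ folnerMean x₀ j := by
  refine ⟨Stmt7Aux.x0 f, ?_, Stmt7Aux.mean_tendsto f, ?_⟩
  · exact (Stmt7Aux.computable_g f hf).comp Stmt7Aux.primrec_natAbs.to_comp
  · intro k hk
    exact ⟨Stmt7Aux.J f k, Stmt7Aux.f_lt_J f k hk, Stmt7Aux.mean_J_lower f k hk⟩
end

section
/- There exists a computable function x₀ : ℤ → {0,1} such that, setting m_j(x₀) = (∑_{i=−j}^{j} x₀(i)) / (2j+1) for j ∈ ℕ: (a) m_j(x₀) → 0 as j → ∞; and (b) for every primitive recursive function f : ℕ → ℕ there exist an integer k ≥ 1 and j > f(k) with m_j(x₀) ≥ 1/k. In particular, the convergence modulus of (m_j(x₀)) is not bounded by any primitive recursive function. -/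
open Filter Topology

namespace Stmt8Aux


/-- One step of a stack machine computing the Ackermann function.
The stack `n :: ms` represents the value `ack ms.head (ack ... n)` folded. -/
def ackStep (l : List ℕ) : List ℕ :=
  l.casesOn [] fun n t =>
    t.casesOn [n] fun m rest =>
      if m = 0 then (n + 1) :: rest
      else if n = 0 then 1 :: (m - 1) :: rest
      else (n - 1) :: m :: (m - 1) :: rest

theorem ackStep_singleton (v : ℕ) : ackStep [v] = [v] := rfl

theorem ackStep_iter_singleton (k v : ℕ) : ackStep^[k] [v] = [v] := by
  induction k with
  | zero => rfl
  | succ k ih => rw [Function.iterate_succ_apply, ackStep_singleton, ih]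

theorem ackStep_reaches : ∀ m n rest, ∃ k, ackStep^[k] (n :: m :: rest) = ack m n :: rest := by
  intro m
  induction m with
  | zero =>
    intro n rest
    exact ⟨1, by simp [ackStep, ack_zero]⟩
  | succ m ihm =>
    intro n
    induction n with
    | zero =>
      intro rest
      obtain ⟨k, hk⟩ := ihm 1 rest
      refine ⟨k + 1, ?_⟩
      rw [Function.iterate_succ_apply]
      have : ackStep (0 :: (m + 1) :: rest) = 1 :: m :: rest := by simp [ackStep]
      rw [this, hk, ack_succ_zero]
    | succ n ihn =>
      intro rest
      obtain ⟨k₁, hk₁⟩ := ihn (m :: rest)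
      obtain ⟨k₂, hk₂⟩ := ihm (ack (m + 1) n) rest
      refine ⟨k₂ + k₁ + 1, ?_⟩
      have h1 : ackStep ((n + 1) :: (m + 1) :: rest) = n :: (m + 1) :: m :: rest := by
        simp [ackStep]
      rw [Function.iterate_add_apply, Function.iterate_one, h1,
        Function.iterate_add_apply, hk₁, hk₂, ack_succ_succ]

/-- Output extraction. -/
def listOut (l : List ℕ) : Option ℕ := if l.length = 1 then l.head? else none

def ackOpt (p : ℕ × ℕ) (k : ℕ) : Option ℕ := listOut (ackStep^[k] [p.2, p.1])

theorem ackOpt_mono {p : ℕ × ℕ} {a : ℕ} {s t : ℕ} (h : s ≤ t) (ha : a ∈ ackOpt p s) :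
    a ∈ ackOpt p t := by
  obtain ⟨d, rfl⟩ := Nat.exists_eq_add_of_le h
  unfold ackOpt listOut at ha ⊢
  rcases hl : ackStep^[s] [p.2, p.1] with _ | ⟨v, t'⟩
  · simp [hl] at ha
  rcases t' with _ | ⟨w, t''⟩
  · simp [hl] at ha
    rw [Nat.add_comm s d, Function.iterate_add_apply, hl, ackStep_iter_singleton]
    simp [ha]
  · simp [hl] at ha

theorem ackOpt_total (p : ℕ × ℕ) : ∃ k, ack p.1 p.2 ∈ ackOpt p k := by
  obtain ⟨k, hk⟩ := ackStep_reaches p.1 p.2 []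
  exact ⟨k, by simp [ackOpt, hk, listOut]⟩

theorem primrec_ackStep : Primrec ackStep := by
  have h₂ : Primrec (fun q : (List ℕ × ℕ × List ℕ) × ℕ × List ℕ =>
      if q.2.1 = 0 then (q.1.2.1 + 1) :: q.2.2
      else if q.1.2.1 = 0 then 1 :: (q.2.1 - 1) :: q.2.2
      else (q.1.2.1 - 1) :: q.2.1 :: (q.2.1 - 1) :: q.2.2) := by
    have pm : Primrec fun q : (List ℕ × ℕ × List ℕ) × ℕ × List ℕ => q.2.1 :=
      Primrec.fst.comp Primrec.snd
    have pn : Primrec fun q : (List ℕ × ℕ × List ℕ) × ℕ × List ℕ => q.1.2.1 :=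
      Primrec.fst.comp (Primrec.snd.comp Primrec.fst)
    have pr : Primrec fun q : (List ℕ × ℕ × List ℕ) × ℕ × List ℕ => q.2.2 :=
      Primrec.snd.comp Primrec.snd
    refine Primrec.ite (Primrec.eq.comp pm (Primrec.const 0))
      (Primrec.list_cons.comp (Primrec.succ.comp pn) pr)
      (Primrec.ite (Primrec.eq.comp pn (Primrec.const 0))
        (Primrec.list_cons.comp (Primrec.const 1)
          (Primrec.list_cons.comp (Primrec.pred.comp pm) pr))
        (Primrec.list_cons.comp (Primrec.pred.comp pn)
          (Primrec.list_cons.comp pm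
            (Primrec.list_cons.comp (Primrec.pred.comp pm) pr))))
  have h₁ : Primrec (fun p : List ℕ × ℕ × List ℕ =>
      (p.2.2).casesOn [p.2.1] (fun m rest =>
        if m = 0 then (p.2.1 + 1) :: rest
        else if p.2.1 = 0 then 1 :: (m - 1) :: rest
        else (p.2.1 - 1) :: m :: (m - 1) :: rest) : List ℕ × ℕ × List ℕ → List ℕ) := by
    exact Primrec.list_casesOn (Primrec.snd.comp Primrec.snd)
      (Primrec.list_cons.comp (Primrec.fst.comp Primrec.snd) (Primrec.const []))
      h₂.to₂
  exact Primrec.list_casesOn Primrec.id (Primrec.const []) h₁.to₂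

theorem computable_iter : Computable fun q : List ℕ × ℕ => ackStep^[q.2] q.1 := by
  have h := Computable.nat_rec (f := fun q : List ℕ × ℕ => q.2)
    (g := fun q : List ℕ × ℕ => q.1)
    (h := fun (_ : List ℕ × ℕ) (r : ℕ × List ℕ) => ackStep r.2)
    Computable.snd Computable.fst
    ((primrec_ackStep.to_comp.comp Computable.snd).comp Computable.snd).to₂
  refine h.of_eq fun q => ?_
  obtain ⟨l, k⟩ := q
  induction k with
  | zero => rfl
  | succ k ih => rw [Function.iterate_succ_apply', ← ih]

theorem computable_ackOpt : Computable₂ ackOpt := by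
  have hout : Primrec listOut := by
    refine Primrec.ite ?_ Primrec.list_head? (Primrec.const none)
    exact Primrec.eq.comp Primrec.list_length (Primrec.const 1)
  have hstart : Computable fun p : (ℕ × ℕ) × ℕ => ([p.1.2, p.1.1] : List ℕ) := by
    exact Computable.list_cons.comp (Computable.snd.comp Computable.fst)
      (Computable.list_cons.comp (Computable.fst.comp Computable.fst)
        (Computable.const []))
  exact (hout.to_comp.comp (computable_iter.comp (hstart.pair Computable.snd))).to₂

theorem computable_ack : Computable fun p : ℕ × ℕ => ack p.1 p.2 := by
  have hp : Partrec fun p : ℕ × ℕ => Nat.rfindOpt (ackOpt p) :=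
    Partrec.rfindOpt computable_ackOpt
  refine hp.of_eq_tot fun p => ?_
  rw [Nat.rfindOpt_mono (fun {a s t} h ha => ackOpt_mono h ha)]
  exact ackOpt_total p




/-- Rapidly growing scale sequence dominating Ackermann. -/
def M : ℕ → ℕ := fun n =>
  Nat.rec 0 (fun k ih => (k + 2) * (ih + ack (4 * k + 8) (4 * k + 8) + 1)) n

theorem M_zero : M 0 = 0 := rfl
theorem M_succ (k : ℕ) : M (k + 1) = (k + 2) * (M k + ack (4 * k + 8) (4 * k + 8) + 1) := rfl

theorem one_le_M {k : ℕ} (hk : 1 ≤ k) : 1 ≤ M k := by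
  obtain ⟨k, rfl⟩ := Nat.exists_eq_succ_of_ne_zero (Nat.one_le_iff_ne_zero.1 hk)
  rw [M_succ]
  exact Nat.one_le_iff_ne_zero.2 (by positivity)

theorem ack_le_M {k : ℕ} (hk : 1 ≤ k) : ack (4 * k + 4) (4 * k + 4) ≤ M k := by
  obtain ⟨k, rfl⟩ := Nat.exists_eq_succ_of_ne_zero (Nat.one_le_iff_ne_zero.1 hk)
  rw [M_succ]
  calc ack (4 * (k + 1) + 4) (4 * (k + 1) + 4) = ack (4 * k + 8) (4 * k + 8) := by ring_nf
    _ ≤ (k + 2) * (M k + ack (4 * k + 8) (4 * k + 8) + 1) := by nlinarith [Nat.zero_le (M k)]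

theorem two_M_le (k : ℕ) : 2 * M k ≤ M (k + 1) := by
  rw [M_succ]; nlinarith [Nat.zero_le (ack (4 * k + 8) (4 * k + 8)), Nat.zero_le (M k)]

theorem M_mono : Monotone M := by
  refine monotone_nat_of_le_succ fun k => ?_
  have := two_M_le k; omega

theorem sum_M_le (K : ℕ) : ∑ k ∈ Finset.Icc 1 K, M k ≤ 2 * M K := by
  induction K with
  | zero => simp [M_zero]
  | succ K ih =>
    rw [Finset.sum_Icc_succ_top (by omega)]
    have := two_M_le K; omega

/-- Whether `n` lies in one of the designated blocks `(k·M k, (k+1)·M k]`, `1 ≤ k ≤ n`. -/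
def hitb : ℕ → Bool := fun n =>
  Nat.rec false
    (fun k ih => ih ||
      (decide ((k + 1) * M (k + 1) < n) && decide (n ≤ (k + 2) * M (k + 1)))) n

def hit (n : ℕ) : Prop := ∃ k, 1 ≤ k ∧ k * M k < n ∧ n ≤ (k + 1) * M k

theorem hitb_aux (n : ℕ) : ∀ j : ℕ,
    (Nat.rec false
      (fun k ih => ih ||
        (decide ((k + 1) * M (k + 1) < n) && decide (n ≤ (k + 2) * M (k + 1)))) j : Bool) = true
    ↔ ∃ k, k ≤ j ∧ 1 ≤ k ∧ k * M k < n ∧ n ≤ (k + 1) * M k := by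
  intro j
  induction j with
  | zero => simp
  | succ j ih =>
    simp only [Nat.rec_add_one, Bool.or_eq_true, Bool.and_eq_true, decide_eq_true_eq, ih]
    constructor
    · rintro (⟨k, hk, h⟩ | ⟨h1, h2⟩)
      · exact ⟨k, by omega, h⟩
      · exact ⟨j + 1, by omega, by omega, h1, h2⟩
    · rintro ⟨k, hk, h1, h2, h3⟩
      rcases Nat.lt_or_ge k (j + 1) with h | h
      · exact Or.inl ⟨k, by omega, h1, h2, h3⟩
      · have : k = j + 1 := by omega
        subst this; exact Or.inr ⟨h2, h3⟩

theorem hitb_iff (n : ℕ) : hitb n = true ↔ hit n := by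
  rw [hitb, hitb_aux]
  constructor
  · rintro ⟨k, _, h⟩; exact ⟨k, h⟩
  · rintro ⟨k, h1, h2, h3⟩
    have hM := one_le_M h1
    have : k ≤ n := by nlinarith
    exact ⟨k, this, h1, h2, h3⟩

theorem hitb_zero : hitb 0 = false := by
  rw [Bool.eq_false_iff]
  intro h
  obtain ⟨k, _, h2, _⟩ := (hitb_iff 0).1 h
  omega

def x₀ : ℤ → Bool := fun i => hitb i.natAbs

theorem computable_M : Computable M := by
  have h := Computable.nat_rec (f := @id ℕ) (g := fun _ : ℕ => 0)
    (h := fun (_ : ℕ) (r : ℕ × ℕ) => (r.1 + 2) * (r.2 + ack (4 * r.1 + 8) (4 * r.1 + 8) + 1))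
    Computable.id (Computable.const 0) ?_
  · exact h.of_eq fun n => rfl
  · have pk : Computable fun q : ℕ × ℕ × ℕ => q.2.1 := Computable.fst.comp Computable.snd
    have pih : Computable fun q : ℕ × ℕ × ℕ => q.2.2 := Computable.snd.comp Computable.snd
    have parg : Computable fun q : ℕ × ℕ × ℕ => 4 * q.2.1 + 8 :=
      Primrec.to_comp <| by
        have : Primrec fun q : ℕ × ℕ × ℕ => q.2.1 := Primrec.fst.comp Primrec.snd
        exact Primrec.nat_add.comp (Primrec.nat_mul.comp (Primrec.const 4) this) (Primrec.const 8)
    have pack : Computable fun q : ℕ × ℕ × ℕ => ack (4 * q.2.1 + 8) (4 * q.2.1 + 8) :=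
      computable_ack.comp (parg.pair parg)
    have := Primrec.nat_mul.to_comp
    exact Computable₂.comp this
      (Primrec.nat_add.to_comp.comp pk (Computable.const 2))
      (Primrec.nat_add.to_comp.comp
        (Primrec.nat_add.to_comp.comp pih pack) (Computable.const 1)) |>.to₂
  
theorem computable_hitb : Computable hitb := by
  have h := Computable.nat_rec (f := @id ℕ) (g := fun _ : ℕ => false)
    (h := fun (n : ℕ) (r : ℕ × Bool) => r.2 ||
      (decide ((r.1 + 1) * M (r.1 + 1) < n) && decide (n ≤ (r.1 + 2) * M (r.1 + 1))))
    Computable.id (Computable.const false) ?_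
  · exact h.of_eq fun n => rfl
  · have pn : Computable fun q : ℕ × ℕ × Bool => q.1 := Computable.fst
    have pk : Computable fun q : ℕ × ℕ × Bool => q.2.1 := Computable.fst.comp Computable.snd
    have pih : Computable fun q : ℕ × ℕ × Bool => q.2.2 := Computable.snd.comp Computable.snd
    have pM1 : Computable fun q : ℕ × ℕ × Bool => (q.2.1 + 1) * M (q.2.1 + 1) := by
      have ha : Computable fun q : ℕ × ℕ × Bool => q.2.1 + 1 :=
        Primrec.succ.to_comp.comp pk
      exact Primrec.nat_mul.to_comp.comp ha (computable_M.comp ha)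
    have pM2 : Computable fun q : ℕ × ℕ × Bool => (q.2.1 + 2) * M (q.2.1 + 1) := by
      have ha : Computable fun q : ℕ × ℕ × Bool => q.2.1 + 1 :=
        Primrec.succ.to_comp.comp pk
      have hb : Computable fun q : ℕ × ℕ × Bool => q.2.1 + 2 :=
        Primrec.nat_add.to_comp.comp pk (Computable.const 2)
      exact Primrec.nat_mul.to_comp.comp hb (computable_M.comp ha)
    have hlt : Computable fun q : ℕ × ℕ × Bool => decide ((q.2.1 + 1) * M (q.2.1 + 1) < q.1) :=
      Primrec.nat_lt.decide.to_comp.comp pM1 pn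
    have hle : Computable fun q : ℕ × ℕ × Bool => decide (q.1 ≤ (q.2.1 + 2) * M (q.2.1 + 1)) :=
      Primrec.nat_le.decide.to_comp.comp pn pM2
    exact (Primrec.or.to_comp.comp pih (Primrec.and.to_comp.comp hlt hle)).to₂

theorem primrec_natAbs : Primrec Int.natAbs := by
  have h : Primrec fun i : ℤ => (Encodable.encode i + 1) / 2 :=
    Primrec.nat_div.comp (Primrec.succ.comp Primrec.encode) (Primrec.const 2)
  refine h.of_eq fun i => ?_
  cases i with
  | ofNat n => show (2 * n + 1) / 2 = n; omega
  | negSucc n => show (2 * n + 1 + 1) / 2 = n + 1; omega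

theorem computable_x₀ : Computable x₀ :=
  computable_hitb.comp primrec_natAbs.to_comp


end Stmt8Aux


namespace Stmt8Aux

theorem sum_eq (j : ℕ) :
    (∑ i ∈ Finset.Icc (-(j : ℤ)) (j : ℤ), (if x₀ i then (1 : ℝ) else 0))
      = 2 * ∑ n ∈ Finset.Icc 1 j, (if hitb n then (1 : ℝ) else 0) := by
  have hsplit : Finset.Icc (-(j:ℤ)) (j:ℤ) = Finset.Icc (-(j:ℤ)) (-1) ∪ Finset.Icc 0 (j:ℤ) := by
    ext i; simp only [Finset.mem_Icc, Finset.mem_union]; omega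
  have hdisj : Disjoint (Finset.Icc (-(j:ℤ)) (-1)) (Finset.Icc 0 (j:ℤ)) := by
    rw [Finset.disjoint_left]; intro a ha hb
    simp only [Finset.mem_Icc] at ha hb; omega
  rw [hsplit, Finset.sum_union hdisj]
  have h1 : Finset.Icc (-(j:ℤ)) (-1) = (Finset.Icc 1 j).image (fun n : ℕ => -(n:ℤ)) := by
    ext i; simp only [Finset.mem_Icc, Finset.mem_image]
    constructor
    · intro h; exact ⟨i.natAbs, by omega, by omega⟩
    · rintro ⟨n, hn, rfl⟩; omega
  have h2 : Finset.Icc (0:ℤ) (j:ℤ) = (Finset.Icc 0 j).image (fun n : ℕ => (n:ℤ)) := by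
    ext i; simp only [Finset.mem_Icc, Finset.mem_image]
    constructor
    · intro h; exact ⟨i.natAbs, by omega, by omega⟩
    · rintro ⟨n, hn, rfl⟩; omega
  rw [h1, h2, Finset.sum_image (by intro a _ b _ h; simp only at h; omega),
      Finset.sum_image (by intro a _ b _ h; simp only at h; omega)]
  have e1 : ∀ n ∈ Finset.Icc 1 j, (if x₀ (-(n:ℤ)) then (1:ℝ) else 0) = (if hitb n then (1:ℝ) else 0) := by
    intro n _; simp [x₀]
  have e2 : ∀ n ∈ Finset.Icc 0 j, (if x₀ ((n:ℤ)) then (1:ℝ) else 0) = (if hitb n then (1:ℝ) else 0) := by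
    intro n _; rfl
  rw [Finset.sum_congr rfl e1, Finset.sum_congr rfl e2]
  have i0 : Finset.Icc 0 j = insert 0 (Finset.Icc 1 j) := by
    ext n; simp only [Finset.mem_Icc, Finset.mem_insert]; omega
  rw [i0, Finset.sum_insert (by simp), hitb_zero]
  simp; ring

theorem sum_lower (K : ℕ) (hK : 1 ≤ K) :
    (M K : ℝ) ≤ ∑ i ∈ Finset.Icc (-(((K+1) * M K : ℕ) : ℤ)) (((K+1) * M K : ℕ) : ℤ),
      (if x₀ i then (1 : ℝ) else 0) := by
  have hM := one_le_M hK
  have hsub : Finset.Icc ((K * M K : ℕ) + 1 : ℤ) (((K+1) * M K : ℕ) : ℤ) ⊆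
      Finset.Icc (-(((K+1) * M K : ℕ):ℤ)) (((K+1) * M K : ℕ):ℤ) := by
    intro i hi; simp only [Finset.mem_Icc] at hi ⊢
    omega
  have hones : ∀ i ∈ Finset.Icc ((K * M K : ℕ) + 1 : ℤ) (((K+1) * M K : ℕ) : ℤ),
      (if x₀ i then (1:ℝ) else 0) = 1 := by
    intro i hi
    simp only [Finset.mem_Icc] at hi
    have hmul : 1 ≤ K * M K := Nat.one_le_iff_ne_zero.2 (by positivity)
    have hx : x₀ i = true := by
      show hitb i.natAbs = true
      rw [hitb_iff]
      exact ⟨K, hK, by omega, by omega⟩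
    simp [hx]
  calc (M K : ℝ) = ∑ _i ∈ Finset.Icc ((K * M K : ℕ) + 1 : ℤ) (((K+1) * M K : ℕ) : ℤ), (1:ℝ) := by
        rw [Finset.sum_const]
        have hcard : (Finset.Icc ((K * M K : ℕ) + 1 : ℤ) (((K+1) * M K : ℕ) : ℤ)).card = M K := by
          rw [Int.card_Icc]
          have h1 : (K+1) * M K = K * M K + M K := by ring
          have : (((K+1) * M K : ℕ):ℤ) + 1 - ((K * M K : ℕ) + 1) = (M K : ℤ) := by
            push_cast [h1]; ring
          rw [this]; exact Int.toNat_natCast _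
        rw [hcard]; simp
    _ = ∑ i ∈ Finset.Icc ((K * M K : ℕ) + 1 : ℤ) (((K+1) * M K : ℕ) : ℤ),
          (if x₀ i then (1:ℝ) else 0) :=
        (Finset.sum_congr rfl hones).symm
    _ ≤ _ := Finset.sum_le_sum_of_subset_of_nonneg hsub
        (fun i _ _ => by positivity)

theorem count_upper {K j : ℕ} (h2 : j < (K + 2) * M (K + 2)) :
    ((Finset.Icc 1 j).filter fun n => hitb n = true).card ≤ 2 * M (K + 1) := by
  have hsub : (Finset.Icc 1 j).filter (fun n => hitb n = true) ⊆
      (Finset.Icc 1 (K+1)).biUnion fun k => Finset.Icc (k * M k + 1) ((k+1) * M k) := by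
    intro n hn
    simp only [Finset.mem_filter, Finset.mem_Icc] at hn
    obtain ⟨⟨hn1, hn2⟩, hhit⟩ := hn
    obtain ⟨k, hk1, hk2, hk3⟩ := (hitb_iff n).1 hhit
    have hkK : k ≤ K + 1 := by
      by_contra hgt
      push_neg at hgt
      have hMk : M (K+2) ≤ M k := M_mono (by omega)
      have : (K+2) * M (K+2) ≤ k * M k := Nat.mul_le_mul (by omega) hMk
      omega
    simp only [Finset.mem_biUnion, Finset.mem_Icc]
    exact ⟨k, ⟨hk1, hkK⟩, by omega, hk3⟩
  calc ((Finset.Icc 1 j).filter fun n => hitb n = true).card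
      ≤ ((Finset.Icc 1 (K+1)).biUnion fun k => Finset.Icc (k * M k + 1) ((k+1) * M k)).card :=
        Finset.card_le_card hsub
    _ ≤ ∑ k ∈ Finset.Icc 1 (K+1), (Finset.Icc (k * M k + 1) ((k+1) * M k)).card :=
        Finset.card_biUnion_le
    _ = ∑ k ∈ Finset.Icc 1 (K+1), M k := by
        refine Finset.sum_congr rfl fun k _ => ?_
        rw [Nat.card_Icc]
        have : (k+1) * M k = k * M k + M k := by ring
        omega
    _ ≤ 2 * M (K + 1) := sum_M_le (K+1)

theorem mean_nonneg (j : ℕ) : 0 ≤ folnerMean x₀ j := by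
  unfold folnerMean
  apply div_nonneg
  · exact Finset.sum_nonneg fun i _ => by positivity
  · positivity

theorem mean_le {K j : ℕ} (h1 : (K+1) * M (K+1) ≤ j) (h2 : j < (K + 2) * M (K + 2)) :
    folnerMean x₀ j ≤ 2 / (K + 1 : ℝ) := by
  have hM := one_le_M (k := K+1) (by omega)
  have hMpos : (0:ℝ) < M (K+1) := by exact_mod_cast hM
  have hsum : (∑ i ∈ Finset.Icc (-(j:ℤ)) (j:ℤ), (if x₀ i then (1:ℝ) else 0))
      ≤ 2 * (2 * M (K+1)) := by
    rw [sum_eq, Finset.sum_boole]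
    have := count_upper h2
    have hc : ((Finset.Icc 1 j).filter fun n => hitb n = true).card ≤ 2 * M (K+1) := this
    have : (((Finset.Icc 1 j).filter fun n => hitb n = true).card : ℝ) ≤ 2 * M (K+1) := by
      exact_mod_cast hc
    nlinarith
  unfold folnerMean
  have hden : (0:ℝ) < 2 * j + 1 := by positivity
  have hden2 : (2 * ((K+1) * M (K+1)) : ℝ) ≤ 2 * j + 1 := by
    have : ((K+1) * M (K+1) : ℕ) ≤ j := h1
    have h' : ((K+1) * M (K+1) : ℝ) ≤ j := by exact_mod_cast this
    nlinarith
  calc (∑ i ∈ Finset.Icc (-(j:ℤ)) (j:ℤ), (if x₀ i then (1:ℝ) else 0)) / (2 * j + 1)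
      ≤ (2 * (2 * M (K+1))) / (2 * j + 1) := by gcongr
    _ ≤ (2 * (2 * M (K+1))) / (2 * ((K+1) * M (K+1))) := by
        apply div_le_div_of_nonneg_left _ _ hden2
        · positivity
        · positivity
    _ = 2 / (K + 1 : ℝ) := by
        field_simp
  
theorem tendsto_mean : Tendsto (fun j : ℕ => folnerMean x₀ j) atTop (nhds 0) := by
  rw [Metric.tendsto_atTop]
  intro ε hε
  obtain ⟨K, hKgt⟩ := exists_nat_gt (2 / ε)
  have hKε : 2 / ((K:ℝ) + 1) < ε := by
    rw [div_lt_iff₀ (by positivity)]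
    rw [div_lt_iff₀ hε] at hKgt
    nlinarith
  refine ⟨(K+1) * M (K+1), fun j hj => ?_⟩
  have hMK1 := one_le_M (k := K+1) (by omega)
  have hKj : K ≤ j := by nlinarith [hj]
  set P : ℕ → Prop := fun k => (k+1) * M (k+1) ≤ j with hP
  have hPK : P K := hj
  set K' : ℕ := Nat.findGreatest P j with hK'
  have hK'ge : K ≤ K' := Nat.le_findGreatest hKj hPK
  have hPK' : P K' := Nat.findGreatest_spec hKj hPK
  have hK'ub : j < (K' + 2) * M (K' + 2) := by
    rcases Nat.lt_or_ge j (K' + 1) with h | h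
    · have : 1 ≤ M (K'+2) := one_le_M (by omega)
      calc j < K' + 1 := h
        _ ≤ (K' + 2) * 1 := by omega
        _ ≤ (K' + 2) * M (K'+2) := Nat.mul_le_mul_left _ this
    · have := Nat.findGreatest_is_greatest (P := P) (n := j) (k := K' + 1) (Nat.lt_succ_self K') h
      rw [hP] at this
      push_neg at this
      rw [show K' + 1 + 1 = K' + 2 by omega] at this
      omega
  have hle := mean_le hPK' hK'ub
  have : 2 / ((K':ℝ) + 1) ≤ 2 / ((K:ℝ) + 1) := by
    apply div_le_div_of_nonneg_left _ _ _
    · norm_num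
    · positivity
    · exact_mod_cast by omega
  rw [Real.dist_eq, abs_of_nonneg (by linarith [mean_nonneg j] : (0:ℝ) ≤ folnerMean x₀ j - 0)]
  simp only [sub_zero]
  linarith

theorem lower_part :
    ∀ f : ℕ → ℕ, Nat.Primrec f →
      ∃ k : ℕ, 1 ≤ k ∧ ∃ j : ℕ, f k < j ∧ (1 / k : ℝ) ≤ folnerMean x₀ j := by
  intro f hf
  obtain ⟨m, hm⟩ := exists_lt_ack_of_nat_primrec hf
  have hK1 : 1 ≤ max m 1 := le_max_right m 1
  set K : ℕ := max m 1 with hK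
  have hmK : m ≤ K := le_max_left m 1
  have hMK := one_le_M hK1
  refine ⟨4 * K + 4, by omega, (K+1) * M K, ?_, ?_⟩
  · calc f (4 * K + 4) < ack m (4 * K + 4) := hm _
      _ ≤ ack (4 * K + 4) (4 * K + 4) := ack_le_ack (by omega) le_rfl
      _ ≤ M K := ack_le_M hK1
      _ ≤ (K + 1) * M K := Nat.le_mul_of_pos_left _ (by omega)
  · unfold folnerMean
    have hlow := sum_lower K hK1
    have hden : (0:ℝ) < 2 * (((K+1) * M K : ℕ) : ℝ) + 1 := by positivity
    have step1 : (1 / ((4 * K + 4 : ℕ)) : ℝ)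
        ≤ (M K : ℝ) / (2 * (((K+1) * M K : ℕ) : ℝ) + 1) := by
      rw [div_le_div_iff₀ (by positivity) hden]
      push_cast
      have h1 : (1 ≤ (M K : ℝ)) := by exact_mod_cast hMK
      have h2 : (1 ≤ (K : ℝ)) := by exact_mod_cast hK1
      nlinarith
    calc (1 / ((4 * K + 4 : ℕ)) : ℝ)
        ≤ (M K : ℝ) / (2 * (((K+1) * M K : ℕ) : ℝ) + 1) := step1
      _ ≤ _ := by gcongr

end Stmt8Aux

open Stmt8Aux in
theorem stmt8 :
    ∃ x₀ : ℤ → Bool, Computable x₀ ∧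
      Tendsto (fun j : ℕ => folnerMean x₀ j) atTop (nhds 0) ∧
      ∀ f : ℕ → ℕ, Nat.Primrec f →
        ∃ k : ℕ, 1 ≤ k ∧ ∃ j : ℕ, f k < j ∧ (1 / k : ℝ) ≤ folnerMean x₀ j :=
  ⟨Stmt8Aux.x₀, computable_x₀, tendsto_mean, lower_part⟩
end

section
/- Let G be a group, n ≥ 1 an integer, D ⊆ G a finite nonempty set, and h : G → ℝ≥0 a nonzero finitely supported function such that for every x ∈ D, ∑_{a∈G} |h(a) − h(x⁻¹a)| < (1/n)·∑_{a∈G} h(a). Then there exists a nonempty finite set F ⊆ supp(h) such that for every x ∈ D, |F \ xF| < (|D|/(2n))·|F|. -/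
open Finset

lemma tele1 (T : ℕ → ℝ) (k : ℕ)
    (hmono : ∀ i j, i < j → j ≤ k → T i < T j) (h0 : T 0 = 0)
    (m : ℕ) (hm : m ≤ k) :
    ∑ i ∈ Finset.range k, (T (i+1) - T i) * (if T (i+1) ≤ T m then (1:ℝ) else 0) = T m := by
  have hcond : ∀ i < k, (T (i+1) ≤ T m ↔ i < m) := by
    intro i hi
    constructor
    · intro hle
      by_contra hlt
      push_neg at hlt
      exact absurd hle (not_le.mpr (hmono m (i+1) (by omega) (by omega)))
    · intro hlt
      rcases eq_or_lt_of_le (Nat.succ_le_of_lt hlt) with he | hl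
      · exact le_of_eq (by rw [← he])
      · exact le_of_lt (hmono _ _ hl hm)
  have h1 : ∑ i ∈ Finset.range k, (T (i+1) - T i) * (if T (i+1) ≤ T m then (1:ℝ) else 0)
      = ∑ i ∈ Finset.range k, (if i < m then T (i+1) - T i else 0) := by
    apply Finset.sum_congr rfl
    intro i hi
    rw [Finset.mem_range] at hi
    by_cases hc : i < m
    · simp [hc, (hcond i hi).mpr hc]
    · have : ¬ T (i+1) ≤ T m := fun hx => hc ((hcond i hi).mp hx)
      simp [hc, this]
  have h2 : ∑ i ∈ Finset.range m, (if i < m then T (i+1) - T i else 0)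
      = ∑ i ∈ Finset.range k, (if i < m then T (i+1) - T i else 0) := by
    apply Finset.sum_subset (Finset.range_subset_range.mpr hm)
    intro x _ hx
    rw [Finset.mem_range] at hx
    simp [hx]
  have h3 : ∑ i ∈ Finset.range m, (if i < m then T (i+1) - T i else 0)
      = ∑ i ∈ Finset.range m, (T (i+1) - T i) := by
    apply Finset.sum_congr rfl
    intro i hi
    rw [Finset.mem_range] at hi
    simp [hi]
  rw [h1, ← h2, h3, Finset.sum_range_sub T m, h0, sub_zero]

lemma tele2 (T : ℕ → ℝ) (k : ℕ)
    (hmono : ∀ i j, i < j → j ≤ k → T i < T j) (h0 : T 0 = 0)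
    (m l : ℕ) (hm : m ≤ k) (hl : l ≤ k) :
    ∑ i ∈ Finset.range k, (T (i+1) - T i) *
      |(if T (i+1) ≤ T m then (1:ℝ) else 0) - (if T (i+1) ≤ T l then 1 else 0)| = |T m - T l| := by
  -- wlog l ≤ m
  have key : ∀ m l : ℕ, m ≤ k → l ≤ k → l ≤ m →
      ∑ i ∈ Finset.range k, (T (i+1) - T i) *
        |(if T (i+1) ≤ T m then (1:ℝ) else 0) - (if T (i+1) ≤ T l then 1 else 0)| = |T m - T l| := by
    intro m l hm hl hlm
    have hTlm : T l ≤ T m := by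
      rcases eq_or_lt_of_le hlm with he | hlt
      · rw [he]
      · exact le_of_lt (hmono _ _ hlt hm)
    have habs : ∀ i, |(if T (i+1) ≤ T m then (1:ℝ) else 0) - (if T (i+1) ≤ T l then 1 else 0)|
        = (if T (i+1) ≤ T m then (1:ℝ) else 0) - (if T (i+1) ≤ T l then 1 else 0) := by
      intro i
      by_cases h1 : T (i+1) ≤ T l
      · simp [h1, h1.trans hTlm]
      · by_cases h2 : T (i+1) ≤ T m <;> simp [h1, h2]
    calc ∑ i ∈ Finset.range k, (T (i+1) - T i) *
          |(if T (i+1) ≤ T m then (1:ℝ) else 0) - (if T (i+1) ≤ T l then 1 else 0)|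
        = ∑ i ∈ Finset.range k, ((T (i+1) - T i) * (if T (i+1) ≤ T m then (1:ℝ) else 0)
            - (T (i+1) - T i) * (if T (i+1) ≤ T l then (1:ℝ) else 0)) := by
          apply Finset.sum_congr rfl; intro i _; rw [habs i]; ring
      _ = T m - T l := by
          rw [Finset.sum_sub_distrib, tele1 T k hmono h0 m hm, tele1 T k hmono h0 l hl]
      _ = |T m - T l| := (abs_of_nonneg (by linarith)).symm
  rcases le_total l m with hlm | hml
  · exact key m l hm hl hlm
  · rw [abs_sub_comm]
    rw [← key l m hl hm hml]
    apply Finset.sum_congr rfl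
    intro i _
    rw [abs_sub_comm]

theorem stmt13 (G : Type) [Group G] [DecidableEq G] (n : ℕ) (hn : 1 ≤ n)
    (D : Finset G) (hDne : D.Nonempty)
    (h : G → ℝ) (hsupp : {a : G | h a ≠ 0}.Finite) (hpos : ∀ a, 0 ≤ h a) (hne : h ≠ 0)
    -- h is (1/n)-invariant in the Reiter sense with respect to D
    (hReiter : ∀ x ∈ D, (∑ᶠ a : G, |h a - h (x⁻¹ * a)|) < (1 / n : ℝ) * ∑ᶠ a : G, h a) :
    ∃ F : Finset G, F.Nonempty ∧ ↑F ⊆ {a : G | h a ≠ 0} ∧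
      ∀ x ∈ D, ((F \ F.image (x * ·)).card : ℝ) < ((D.card : ℝ) / (2 * n)) * F.card := by
  classical
  set S : Finset G := hsupp.toFinset with hSdef
  have hmemS : ∀ a, a ∈ S ↔ h a ≠ 0 := fun a => hsupp.mem_toFinset
  have hSne : S.Nonempty := by
    rcases Function.ne_iff.mp hne with ⟨a, ha⟩
    exact ⟨a, (hmemS a).mpr (by simpa using ha)⟩
  have hSpos : ∀ a ∈ S, 0 < h a := fun a ha =>
    lt_of_le_of_ne (hpos a) (Ne.symm ((hmemS a).mp ha))
  set vals : Finset ℝ := S.image h with hvalsdef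
  set L : List ℝ := vals.sort (· ≤ ·) with hLdef
  set k : ℕ := L.length with hkdef
  set T : ℕ → ℝ := fun i => (0 :: L).getD i 0 with hTdef
  have hT0 : T 0 = 0 := rfl
  have hLpos : ∀ t ∈ L, 0 < t := by
    intro t ht
    rw [hLdef, Finset.mem_sort] at ht
    rcases Finset.mem_image.mp ht with ⟨a, ha, rfl⟩
    exact hSpos a ha
  have hMsorted : (0 :: L).Pairwise (· < ·) :=
    List.pairwise_cons.mpr ⟨hLpos, vals.sortedLT_sort.pairwise⟩
  have hMlen : (0 :: L).length = k + 1 := by simp [hkdef]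
  have hTget : ∀ i (hi : i < k + 1), T i = (0 :: L).get ⟨i, by omega⟩ := by
    intro i hi
    rw [hTdef]
    exact List.getD_eq_get _ 0 ⟨i, by rw [hMlen]; omega⟩
  have hmono : ∀ i j, i < j → j ≤ k → T i < T j := by
    intro i j hij hjk
    rw [hTget i (by omega), hTget j (by omega)]
    exact List.pairwise_iff_get.mp hMsorted ⟨i, by omega⟩ ⟨j, by omega⟩ (by simpa using hij)
  have hTmemL : ∀ i, i < k → T (i + 1) ∈ L := by
    intro i hi
    rw [hTget (i+1) (by omega)]
    have : (0 :: L).get ⟨i + 1, by omega⟩ = L.get ⟨i, by simpa using hi⟩ := rfl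
    rw [this]
    exact L.get_mem _
  have hTpos : ∀ i, i < k → 0 < T (i + 1) := fun i hi => hLpos _ (hTmemL i hi)
  -- every value of h is some T m
  have hidx : ∀ a : G, ∃ m, m ≤ k ∧ T m = h a := by
    intro a
    by_cases ha : h a = 0
    · exact ⟨0, Nat.zero_le _, by rw [hT0, ha]⟩
    · have : h a ∈ L := by
        rw [hLdef, Finset.mem_sort]
        exact Finset.mem_image.mpr ⟨a, (hmemS a).mpr ha, rfl⟩
      rcases List.mem_iff_get.mp this with ⟨⟨j, hj⟩, hget⟩
      refine ⟨j + 1, by omega, ?_⟩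
      rw [hTget (j+1) (by omega)]
      exact hget
  have hkpos : 0 < k := by
    rcases hSne with ⟨a, ha⟩
    rcases hidx a with ⟨m, hm, hTm⟩
    by_contra hk
    push_neg at hk
    have hm0 : m = 0 := by omega
    rw [hm0, hT0] at hTm
    exact (hmemS a).mp ha hTm.symm
  -- the level sets
  set F : ℕ → Finset G := fun i => S.filter (fun a => T (i + 1) ≤ h a) with hFdef
  have hmemF : ∀ i, i < k → ∀ a, (a ∈ F i ↔ T (i + 1) ≤ h a) := by
    intro i hi a
    constructor
    · intro ha; exact (Finset.mem_filter.mp ha).2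
    · intro ha
      refine Finset.mem_filter.mpr ⟨(hmemS a).mpr ?_, ha⟩
      have := hTpos i hi
      intro h0; rw [h0] at ha; linarith
  have hmemxF : ∀ i, i < k → ∀ x a, (a ∈ (F i).image (x * ·) ↔ T (i + 1) ≤ h (x⁻¹ * a)) := by
    intro i hi x a
    rw [Finset.mem_image]
    constructor
    · rintro ⟨b, hb, rfl⟩
      have := (hmemF i hi b).mp hb
      simpa using this
    · intro ha
      exact ⟨x⁻¹ * a, (hmemF i hi _).mpr ha, by group⟩
  -- the big ambient sets
  set B : G → Finset G := fun x => S ∪ S.image (x * ·) with hBdef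
  have hFsubB : ∀ i x, F i ⊆ B x := fun i x =>
    (Finset.filter_subset _ _).trans Finset.subset_union_left
  have hxFsubB : ∀ i x, (F i).image (x * ·) ⊆ B x := fun i x =>
    (Finset.image_subset_image (Finset.filter_subset _ _)).trans Finset.subset_union_right
  have hnotB : ∀ x a, a ∉ B x → h a = 0 ∧ h (x⁻¹ * a) = 0 := by
    intro x a ha
    rw [hBdef] at ha
    simp only [Finset.mem_union, Finset.mem_image, not_or, not_exists] at ha
    constructor
    · by_contra h0; exact ha.1 ((hmemS a).mpr h0)
    · by_contra h0
      exact ha.2 (x⁻¹ * a) ⟨(hmemS _).mpr h0, by group⟩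
  -- finsum conversions
  have hsum_h : ∑ᶠ a, h a = ∑ a ∈ S, h a := by
    apply finsum_eq_finset_sum_of_support_subset
    intro a ha
    exact (hmemS a).mpr ha
  have hsum_abs : ∀ x, (∑ᶠ a, |h a - h (x⁻¹ * a)|) = ∑ a ∈ B x, |h a - h (x⁻¹ * a)| := by
    intro x
    apply finsum_eq_finset_sum_of_support_subset
    intro a ha
    by_contra hB
    rcases hnotB x a hB with ⟨h1, h2⟩
    apply ha
    rw [Function.mem_support] at *
    simp [h1, h2] at *
  -- card identities
  have c1 : ∀ i, i < k → ((F i).card : ℝ) = ∑ a ∈ S, (if T (i+1) ≤ h a then (1:ℝ) else 0) := by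
    intro i hi
    rw [hFdef]
    simp only
    rw [Finset.card_filter]
    push_cast
    apply Finset.sum_congr rfl
    intro a _
    by_cases hc : T (i+1) ≤ h a <;> simp [hc]
  have c3 : ∀ i x, i < k → ((F i).image (x * ·) \ F i).card = (F i \ (F i).image (x * ·)).card := by
    intro i x hi
    have hinj : Function.Injective (x * ·) := fun a b hab => by simpa using hab
    have h1 := Finset.card_sdiff_add_card_inter ((F i).image (x * ·)) (F i)
    have h2 := Finset.card_sdiff_add_card_inter (F i) ((F i).image (x * ·))
    have h3 : ((F i).image (x * ·)).card = (F i).card := Finset.card_image_of_injective _ hinj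
    rw [Finset.inter_comm] at h1
    omega
  have c2 : ∀ i x, i < k →
      (((F i \ (F i).image (x * ·)).card : ℝ) + (((F i).image (x * ·) \ F i).card : ℝ)) =
      ∑ a ∈ B x, |(if T (i+1) ≤ h a then (1:ℝ) else 0) - (if T (i+1) ≤ h (x⁻¹ * a) then 1 else 0)| := by
    intro i x hi
    have e1 : F i \ (F i).image (x * ·) =
        (B x).filter (fun a => T (i+1) ≤ h a ∧ ¬ T (i+1) ≤ h (x⁻¹ * a)) := by
      ext a
      simp only [Finset.mem_sdiff, Finset.mem_filter]
      constructor
      · intro ⟨h1, h2⟩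
        exact ⟨hFsubB i x h1, (hmemF i hi a).mp h1, fun hc => h2 ((hmemxF i hi x a).mpr hc)⟩
      · intro ⟨_, h1, h2⟩
        exact ⟨(hmemF i hi a).mpr h1, fun hc => h2 ((hmemxF i hi x a).mp hc)⟩
    have e2 : (F i).image (x * ·) \ F i =
        (B x).filter (fun a => ¬ T (i+1) ≤ h a ∧ T (i+1) ≤ h (x⁻¹ * a)) := by
      ext a
      simp only [Finset.mem_sdiff, Finset.mem_filter]
      constructor
      · intro ⟨h1, h2⟩
        exact ⟨hxFsubB i x h1, fun hc => h2 ((hmemF i hi a).mpr hc), (hmemxF i hi x a).mp h1⟩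
      · intro ⟨_, h1, h2⟩
        exact ⟨(hmemxF i hi x a).mpr h2, fun hc => h1 ((hmemF i hi a).mp hc)⟩
    rw [e1, e2, Finset.card_filter, Finset.card_filter]
    push_cast
    rw [← Finset.sum_add_distrib]
    apply Finset.sum_congr rfl
    intro a _
    by_cases h1 : T (i+1) ≤ h a <;> by_cases h2 : T (i+1) ≤ h (x⁻¹ * a) <;> simp [h1, h2]
  -- layer cake A
  have LA : ∑ i ∈ Finset.range k, (T (i+1) - T i) * ((F i).card : ℝ) = ∑ a ∈ S, h a := by
    calc ∑ i ∈ Finset.range k, (T (i+1) - T i) * ((F i).card : ℝ)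
        = ∑ i ∈ Finset.range k, ∑ a ∈ S, (T (i+1) - T i) * (if T (i+1) ≤ h a then (1:ℝ) else 0) := by
          apply Finset.sum_congr rfl
          intro i hi
          rw [Finset.mem_range] at hi
          rw [c1 i hi, Finset.mul_sum]
      _ = ∑ a ∈ S, ∑ i ∈ Finset.range k, (T (i+1) - T i) * (if T (i+1) ≤ h a then (1:ℝ) else 0) :=
          Finset.sum_comm
      _ = ∑ a ∈ S, h a := by
          apply Finset.sum_congr rfl
          intro a _
          rcases hidx a with ⟨m, hm, hTm⟩
          rw [← hTm]
          exact tele1 T k hmono hT0 m hm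
  -- layer cake B
  have LB : ∀ x, ∑ i ∈ Finset.range k, (T (i+1) - T i) *
      (∑ a ∈ B x, |(if T (i+1) ≤ h a then (1:ℝ) else 0) - (if T (i+1) ≤ h (x⁻¹ * a) then 1 else 0)|)
      = ∑ a ∈ B x, |h a - h (x⁻¹ * a)| := by
    intro x
    calc ∑ i ∈ Finset.range k, (T (i+1) - T i) *
        (∑ a ∈ B x, |(if T (i+1) ≤ h a then (1:ℝ) else 0) - (if T (i+1) ≤ h (x⁻¹ * a) then 1 else 0)|)
        = ∑ i ∈ Finset.range k, ∑ a ∈ B x, (T (i+1) - T i) *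
            |(if T (i+1) ≤ h a then (1:ℝ) else 0) - (if T (i+1) ≤ h (x⁻¹ * a) then 1 else 0)| := by
          apply Finset.sum_congr rfl
          intro i _
          rw [Finset.mul_sum]
      _ = ∑ a ∈ B x, ∑ i ∈ Finset.range k, (T (i+1) - T i) *
            |(if T (i+1) ≤ h a then (1:ℝ) else 0) - (if T (i+1) ≤ h (x⁻¹ * a) then 1 else 0)| :=
          Finset.sum_comm
      _ = ∑ a ∈ B x, |h a - h (x⁻¹ * a)| := by
          apply Finset.sum_congr rfl
          intro a _
          rcases hidx a with ⟨m, hm, hTm⟩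
          rcases hidx (x⁻¹ * a) with ⟨l, hl, hTl⟩
          rw [← hTm, ← hTl]
          exact tele2 T k hmono hT0 m l hm hl
  -- main argument by contradiction
  by_contra hcon
  push_neg at hcon
  -- F i is nonempty and supported in supp h
  obtain ⟨astar, hastar, hhastar⟩ : ∃ a ∈ S, h a = T k := by
    have : T k ∈ L := by
      have := hTmemL (k - 1) (by omega)
      have he : k - 1 + 1 = k := by omega
      rwa [he] at this
    rw [hLdef, Finset.mem_sort, hvalsdef] at this
    rcases Finset.mem_image.mp this with ⟨a, ha, hae⟩
    exact ⟨a, ha, hae⟩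
  have hFne : ∀ i, i < k → (F i).Nonempty := by
    intro i hi
    refine ⟨astar, (hmemF i hi astar).mpr ?_⟩
    rw [hhastar]
    rcases eq_or_lt_of_le (Nat.succ_le_of_lt hi) with he | hl
    · exact le_of_eq (by rw [← he])
    · exact le_of_lt (hmono _ _ hl le_rfl)
  have hFsub : ∀ i, i < k → ↑(F i) ⊆ {a : G | h a ≠ 0} := by
    intro i hi a ha
    have : a ∈ S := Finset.mem_of_mem_filter a ha
    exact (hmemS a).mp this
  have hn0 : (0:ℝ) < (n : ℝ) := by exact_mod_cast hn
  -- key per-level inequality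
  have hkey : ∀ i, i < k → ((D.card : ℝ) / n) * ((F i).card : ℝ) ≤
      ∑ x ∈ D, (((F i \ (F i).image (x * ·)).card : ℝ) + (((F i).image (x * ·) \ F i).card : ℝ)) := by
    intro i hi
    obtain ⟨x, hxD, hxle⟩ := hcon (F i) (hFne i hi) (hFsub i hi)
    have hterm : ((D.card : ℝ) / n) * ((F i).card : ℝ) ≤
        ((F i \ (F i).image (x * ·)).card : ℝ) + (((F i).image (x * ·) \ F i).card : ℝ) := by
      have h3 : (((F i).image (x * ·) \ F i).card : ℝ) = ((F i \ (F i).image (x * ·)).card : ℝ) := by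
        exact_mod_cast congrArg Nat.cast (c3 i x hi)
      rw [h3]
      have : ((D.card : ℝ) / (2 * n)) * ((F i).card : ℝ) ≤ ((F i \ (F i).image (x * ·)).card : ℝ) := hxle
      have heq : ((D.card : ℝ) / n) * ((F i).card : ℝ) =
          2 * (((D.card : ℝ) / (2 * n)) * ((F i).card : ℝ)) := by
        field_simp
      rw [heq]
      linarith
    refine hterm.trans (Finset.single_le_sum
      (f := fun y => (((F i \ (F i).image (y * ·)).card : ℝ) + (((F i).image (y * ·) \ F i).card : ℝ)))
      (fun y _ => ?_) hxD)
    exact add_nonneg (Nat.cast_nonneg _) (Nat.cast_nonneg _)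
  have hc : 0 < ∑ a ∈ S, h a := Finset.sum_pos (fun a ha => hSpos a ha) hSne
  have hw : ∀ i, i < k → 0 ≤ T (i + 1) - T i := by
    intro i hi
    have := hmono i (i + 1) (by omega) (by omega)
    linarith
  have main : ((D.card : ℝ) / n) * ∑ a ∈ S, h a < ((D.card : ℝ) / n) * ∑ a ∈ S, h a := by
    calc ((D.card : ℝ) / n) * ∑ a ∈ S, h a
        = ∑ i ∈ Finset.range k, (T (i+1) - T i) * (((D.card : ℝ) / n) * ((F i).card : ℝ)) := by
          rw [← LA, Finset.mul_sum]
          apply Finset.sum_congr rfl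
          intro i _
          ring
      _ ≤ ∑ i ∈ Finset.range k, (T (i+1) - T i) *
            (∑ x ∈ D, (((F i \ (F i).image (x * ·)).card : ℝ) + (((F i).image (x * ·) \ F i).card : ℝ))) := by
          apply Finset.sum_le_sum
          intro i hi
          rw [Finset.mem_range] at hi
          exact mul_le_mul_of_nonneg_left (hkey i hi) (hw i hi)
      _ = ∑ x ∈ D, ∑ i ∈ Finset.range k, (T (i+1) - T i) *
            (((F i \ (F i).image (x * ·)).card : ℝ) + (((F i).image (x * ·) \ F i).card : ℝ)) := by
          rw [← Finset.sum_comm]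
          apply Finset.sum_congr rfl
          intro i _
          rw [Finset.mul_sum]
      _ = ∑ x ∈ D, ∑ a ∈ B x, |h a - h (x⁻¹ * a)| := by
          apply Finset.sum_congr rfl
          intro x _
          rw [← LB x]
          apply Finset.sum_congr rfl
          intro i hi
          rw [Finset.mem_range] at hi
          rw [c2 i x hi]
      _ < ∑ x ∈ D, ((1 / n : ℝ) * ∑ a ∈ S, h a) := by
          apply Finset.sum_lt_sum_of_nonempty hDne
          intro x hx
          rw [← hsum_abs x, ← hsum_h]
          exact hReiter x hx
      _ = ((D.card : ℝ) / n) * ∑ a ∈ S, h a := by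
          rw [Finset.sum_const, nsmul_eq_mul]
          ring
  exact lt_irrefl _ main
end

section
/- Let G be a countable group and ν : ℕ → G a surjection such that the set {(w, w') ∈ F_ℕ × F_ℕ : ν̄(w) = ν̄(w')} is computably enumerable, where F_ℕ is the free group on the countable generating set ℕ and ν̄ : F_ℕ → G is the group homomorphism extending ν. Then there exist a group structure (ℕ, ⋆, ⁻¹, e) on the natural numbers whose multiplication and inverse are computable functions, and a surjective group homomorphism ν⁰ : (ℕ, ⋆, ⁻¹, e) → G such that the set {(a, b) ∈ ℕ² : ν⁰(a) = ν⁰(b)} is computably enumerable. -/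
namespace Stmt14Aux

/-! ### Letter codes and a bijective coding of reduced words -/

def flipc (p : ℕ) : ℕ := if p % 2 = 0 then p + 1 else p - 1

def unshift (p d : ℕ) : ℕ := if d < flipc p then d else d + 1

def shift (p q : ℕ) : ℕ := if q < flipc p then q else q - 1

def letterDec (q : ℕ) : ℕ × Bool := (q / 2, decide (q % 2 = 1))

def letterEnc (x : ℕ × Bool) : ℕ := 2 * x.1 + (bif x.2 then 1 else 0)

lemma letterEnc_letterDec (q : ℕ) : letterEnc (letterDec q) = q := by
  rcases Nat.mod_two_eq_zero_or_one q with h | h <;>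
    simp [letterDec, letterEnc, h] <;> omega

lemma letterDec_letterEnc (x : ℕ × Bool) : letterDec (letterEnc x) = x := by
  obtain ⟨a, b⟩ := x
  cases b <;> simp [letterDec, letterEnc] <;> omega

lemma flip_iff (q q' : ℕ) :
    q' = flipc q ↔ ((letterDec q).1 = (letterDec q').1 ∧ (letterDec q).2 = !(letterDec q').2) := by
  rcases Nat.mod_two_eq_zero_or_one q with h | h <;>
    rcases Nat.mod_two_eq_zero_or_one q' with h' | h' <;>
      simp [flipc, letterDec, h, h'] <;> omega

lemma shift_unshift (p d : ℕ) : shift p (unshift p d) = d := by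
  unfold shift unshift; split_ifs <;> omega

lemma unshift_ne (p d : ℕ) : unshift p d ≠ flipc p := by
  unfold unshift; split_ifs <;> omega

lemma unshift_shift {p q : ℕ} (h : q ≠ flipc p) : unshift p (shift p q) = q := by
  unfold shift unshift; split_ifs <;> omega

def decodeTail (p : ℕ) : List ℕ → List ℕ
  | [] => []
  | d :: ds => unshift p d :: decodeTail (unshift p d) ds

def codeList : List ℕ → List ℕ
  | [] => []
  | c :: ds => c :: decodeTail c ds

def encodeTail (p : ℕ) : List ℕ → List ℕ
  | [] => []
  | q :: qs => shift p q :: encodeTail q qs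

def uncodeList : List ℕ → List ℕ
  | [] => []
  | c :: qs => c :: encodeTail c qs

lemma encodeTail_decodeTail : ∀ (ds : List ℕ) (p : ℕ), encodeTail p (decodeTail p ds) = ds
  | [], _ => rfl
  | d :: ds, p => by
    simp [decodeTail, encodeTail, shift_unshift, encodeTail_decodeTail ds]

lemma decodeTail_encodeTail : ∀ (qs : List ℕ) (p : ℕ),
    List.Chain (fun a b => b ≠ flipc a) p qs → decodeTail p (encodeTail p qs) = qs
  | [], _, _ => rfl
  | q :: qs, p, h => by
    rcases List.chain_cons.1 h with ⟨h1, h2⟩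
    simp [encodeTail, decodeTail, unshift_shift h1, decodeTail_encodeTail qs q h2]

lemma chain_decodeTail : ∀ (ds : List ℕ) (p : ℕ),
    List.Chain (fun a b => b ≠ flipc a) p (decodeTail p ds)
  | [], _ => List.Chain.nil
  | d :: ds, p => List.chain_cons.2 ⟨unshift_ne p d, chain_decodeTail ds (unshift p d)⟩

lemma uncode_code (ds : List ℕ) : uncodeList (codeList ds) = ds := by
  cases ds with
  | nil => rfl
  | cons c ds => simp [codeList, uncodeList, encodeTail_decodeTail]

lemma code_uncode (qs : List ℕ) (h : List.Chain' (fun a b => b ≠ flipc a) qs) :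
    codeList (uncodeList qs) = qs := by
  cases qs with
  | nil => rfl
  | cons c qs => simp [uncodeList, codeList, decodeTail_encodeTail qs c h]

lemma chain'_codeList (ds : List ℕ) :
    List.Chain' (fun a b => b ≠ flipc a) (codeList ds) := by
  cases ds with
  | nil => exact List.isChain_nil
  | cons c ds => exact chain_decodeTail ds c

/-! ### Reducedness and chains -/

def Ok (a b : ℕ × Bool) : Prop := ¬(a.1 = b.1 ∧ a.2 = !b.2)

lemma ok_iff (q q' : ℕ) : Ok (letterDec q) (letterDec q') ↔ q' ≠ flipc q := by
  unfold Ok; exact (not_congr (flip_iff q q')).symm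

lemma reduce_eq_self_of_chain' : ∀ (l : List (ℕ × Bool)),
    List.Chain' Ok l → FreeGroup.reduce l = l
  | [], _ => rfl
  | [a], _ => rfl
  | a :: b :: t, h => by
    have h2 : FreeGroup.reduce (b :: t) = b :: t :=
      reduce_eq_self_of_chain' (b :: t) (List.IsChain.tail h)
    have hab : Ok a b := (List.isChain_cons_cons.1 h).1
    rw [FreeGroup.reduce.cons, h2]
    simp only [if_neg hab]

lemma chain'_of_reduce : ∀ (l : List (ℕ × Bool)),
    FreeGroup.reduce l = l → List.Chain' Ok l
  | [], _ => List.isChain_nil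
  | [a], _ => List.isChain_singleton a
  | a :: b :: t, h => by
    have hlen : (FreeGroup.reduce (b :: t)).length ≤ (b :: t).length :=
      (FreeGroup.reduce.red (L := b :: t)).length_le
    rw [FreeGroup.reduce.cons] at h
    rcases hr : FreeGroup.reduce (b :: t) with _ | ⟨hd, tl⟩
    · rw [hr] at h; simp at h
    · rw [hr] at h hlen
      have h' : (if a.1 = hd.1 ∧ a.2 = !hd.2 then tl else a :: hd :: tl) = a :: b :: t := h
      by_cases hbad : a.1 = hd.1 ∧ a.2 = !hd.2
      · rw [if_pos hbad] at h'
        have := congrArg List.length h'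
        simp at this hlen; omega
      · rw [if_neg hbad] at h'
        simp only [List.cons.injEq] at h'
        obtain ⟨-, h1, h2⟩ := h'
        rw [h1, h2] at hr; rw [h1] at hbad
        have htail : List.Chain' Ok (b :: t) := chain'_of_reduce (b :: t) hr
        exact List.isChain_cons_cons.2 ⟨hbad, htail⟩

/-! ### The bijection between ℕ and the free group -/

def wordOf (n : ℕ) : List (ℕ × Bool) :=
  (codeList (Denumerable.ofNat (List ℕ) n)).map letterDec

def codeOfRed (l : List (ℕ × Bool)) : ℕ :=
  Encodable.encode (uncodeList (l.map letterEnc))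

def codeOf (l : List (ℕ × Bool)) : ℕ := codeOfRed (FreeGroup.reduce l)

lemma chain'_map_letterDec {qs : List ℕ}
    (h : List.Chain' (fun a b => b ≠ flipc a) qs) :
    List.Chain' Ok (qs.map letterDec) :=
  List.isChain_map_of_isChain letterDec (fun a b hab => (ok_iff a b).2 hab) h

lemma wordOf_reduced (n : ℕ) : FreeGroup.reduce (wordOf n) = wordOf n :=
  reduce_eq_self_of_chain' _ (chain'_map_letterDec (chain'_codeList _))

lemma codeOfRed_wordOf (n : ℕ) : codeOfRed (wordOf n) = n := by
  unfold codeOfRed wordOf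
  rw [List.map_map]
  have : letterEnc ∘ letterDec = id := funext letterEnc_letterDec
  rw [this, List.map_id, uncode_code, Denumerable.encode_ofNat]

lemma wordOf_codeOfRed {l : List (ℕ × Bool)} (h : FreeGroup.reduce l = l) :
    wordOf (codeOfRed l) = l := by
  unfold codeOfRed wordOf
  rw [Denumerable.ofNat_encode]
  have hch : List.Chain' (fun a b => b ≠ flipc a) (l.map letterEnc) := by
    have hok : List.Chain' Ok l := chain'_of_reduce l h
    have : List.Chain' (fun a b : ℕ × Bool => letterEnc b ≠ flipc (letterEnc a)) l := by
      refine hok.imp (fun {a b} hab => ?_)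
      have := (ok_iff (letterEnc a) (letterEnc b))
      rw [letterDec_letterEnc, letterDec_letterEnc] at this
      exact this.1 hab
    exact List.isChain_map_of_isChain letterEnc (fun a b hab => hab) this
  rw [code_uncode _ hch, List.map_map]
  have : letterDec ∘ letterEnc = id := funext letterDec_letterEnc
  rw [this, List.map_id]

noncomputable def Φ (n : ℕ) : FreeGroup ℕ := FreeGroup.mk (wordOf n)

noncomputable def Ψ (g : FreeGroup ℕ) : ℕ := codeOfRed g.toWord

lemma Ψ_Φ (n : ℕ) : Ψ (Φ n) = n := by
  unfold Ψ Φ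
  rw [FreeGroup.toWord_mk, wordOf_reduced, codeOfRed_wordOf]

lemma Φ_Ψ (g : FreeGroup ℕ) : Φ (Ψ g) = g := by
  unfold Ψ Φ
  rw [wordOf_codeOfRed (FreeGroup.reduce_toWord g), FreeGroup.mk_toWord]

/-! ### Primrec facts -/

lemma primrec_flipc : Primrec flipc :=
  Primrec.ite
    (PrimrecRel.comp Primrec.eq (Primrec.nat_mod.comp .id (.const 2)) (.const 0))
    (Primrec.succ.comp .id) Primrec.pred

lemma primrec_unshift : Primrec₂ unshift :=
  Primrec.ite
    (PrimrecRel.comp Primrec.nat_lt Primrec.snd (primrec_flipc.comp Primrec.fst))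
    Primrec.snd (Primrec.succ.comp Primrec.snd)

lemma primrec_shift : Primrec₂ shift :=
  Primrec.ite
    (PrimrecRel.comp Primrec.nat_lt Primrec.snd (primrec_flipc.comp Primrec.fst))
    Primrec.snd (Primrec.pred.comp Primrec.snd)

lemma primrec_letterDec : Primrec letterDec :=
  Primrec.pair (Primrec.nat_div.comp .id (.const 2))
    (PrimrecRel.comp Primrec.eq (Primrec.nat_mod.comp .id (.const 2)) (.const 1)).decide

lemma primrec_letterEnc : Primrec letterEnc := by
  have : Primrec (fun x : ℕ × Bool => 2 * x.1 + (bif x.2 then 1 else 0)) :=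
    Primrec.nat_add.comp (Primrec.nat_mul.comp (.const 2) Primrec.fst)
      (Primrec.cond Primrec.snd (.const 1) (.const 0))
  exact this

def dStep (acc : List ℕ) (d : ℕ) : List ℕ :=
  if acc = [] then [d] else unshift acc.headI d :: acc

lemma primrec_dStep : Primrec₂ dStep :=
  Primrec.ite (PrimrecRel.comp Primrec.eq Primrec.fst (.const []))
    (Primrec.list_cons.comp Primrec.snd (.const []))
    (Primrec.list_cons.comp
      (primrec_unshift.comp (Primrec.list_headI.comp Primrec.fst) Primrec.snd)
      Primrec.fst)

lemma foldl_dStep : ∀ (ds : List ℕ) (q : ℕ) (rest : List ℕ),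
    List.foldl dStep (q :: rest) ds = (decodeTail q ds).reverse ++ (q :: rest)
  | [], _, _ => rfl
  | d :: ds, q, rest => by
    have : dStep (q :: rest) d = unshift q d :: q :: rest := by simp [dStep]
    rw [List.foldl_cons, this, foldl_dStep ds (unshift q d) (q :: rest)]
    simp [decodeTail]

lemma codeList_eq_foldl (l : List ℕ) :
    codeList l = (List.foldl dStep [] l).reverse := by
  cases l with
  | nil => rfl
  | cons c ds =>
    have : dStep [] c = [c] := by simp [dStep]
    rw [List.foldl_cons, this, foldl_dStep ds c [], codeList]
    simp

lemma primrec_codeList : Primrec codeList := by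
  have h : Primrec fun l : List ℕ => (List.foldl dStep [] l).reverse :=
    Primrec.list_reverse.comp
      (Primrec.list_foldl Primrec.id (.const [])
        ((primrec_dStep.comp (Primrec.fst.comp Primrec.snd)
          (Primrec.snd.comp Primrec.snd)).to₂))
  exact h.of_eq fun l => (codeList_eq_foldl l).symm

def eStep (st : List ℕ × ℕ) (q : ℕ) : List ℕ × ℕ :=
  (if st.1 = [] then [q] else shift st.2 q :: st.1, q)

lemma primrec_eStep : Primrec₂ eStep :=
  Primrec.pair
    (Primrec.ite
      (PrimrecRel.comp Primrec.eq (Primrec.fst.comp Primrec.fst) (.const []))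
      (Primrec.list_cons.comp Primrec.snd (.const []))
      (Primrec.list_cons.comp
        (primrec_shift.comp (Primrec.snd.comp Primrec.fst) Primrec.snd)
        (Primrec.fst.comp Primrec.fst)))
    Primrec.snd

lemma foldl_eStep : ∀ (qs : List ℕ) (p r0 : ℕ) (rest : List ℕ),
    List.foldl eStep (r0 :: rest, p) qs =
      ((encodeTail p qs).reverse ++ (r0 :: rest), qs.getLastD p)
  | [], _, _, _ => rfl
  | q :: qs, p, r0, rest => by
    have : eStep (r0 :: rest, p) q = (shift p q :: r0 :: rest, q) := by simp [eStep]
    rw [List.foldl_cons, this, foldl_eStep qs q (shift p q) (r0 :: rest)]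
    simp only [encodeTail, List.reverse_cons, List.append_assoc, List.cons_append,
      List.nil_append, List.getLastD_cons]

lemma uncodeList_eq_foldl (l : List ℕ) :
    uncodeList l = (List.foldl eStep ([], 0) l).1.reverse := by
  cases l with
  | nil => rfl
  | cons c qs =>
    have : eStep ([], 0) c = ([c], c) := by simp [eStep]
    rw [List.foldl_cons, this, foldl_eStep qs c c [], uncodeList]
    simp

lemma primrec_uncodeList : Primrec uncodeList := by
  have h : Primrec fun l : List ℕ => (List.foldl eStep ([], 0) l).1.reverse :=
    Primrec.list_reverse.comp
      (Primrec.fst.comp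
        (Primrec.list_foldl Primrec.id (.const (([] : List ℕ), 0))
          ((primrec_eStep.comp (Primrec.fst.comp Primrec.snd)
            (Primrec.snd.comp Primrec.snd)).to₂)))
  exact h.of_eq fun l => (uncodeList_eq_foldl l).symm

def rStep (x : ℕ × Bool) (ih : List (ℕ × Bool)) : List (ℕ × Bool) :=
  List.casesOn ih [x] fun hd tl =>
    if x.1 = hd.1 ∧ x.2 = !hd.2 then tl else x :: hd :: tl

lemma reduce_eq_foldr (l : List (ℕ × Bool)) :
    FreeGroup.reduce l = List.foldr rStep [] l := by
  induction l with
  | nil => rfl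
  | cons x xs ih => rw [FreeGroup.reduce.cons, List.foldr_cons, ← ih]; rfl

lemma primrec_rStep : Primrec₂ rStep := by
  have hh : Primrec₂ fun (a : (ℕ × Bool) × List (ℕ × Bool))
      (p : (ℕ × Bool) × List (ℕ × Bool)) =>
      (if a.1.1 = p.1.1 ∧ a.1.2 = !p.1.2 then p.2 else a.1 :: p.1 :: p.2 : List (ℕ × Bool)) := by
    apply Primrec.ite
    · exact PrimrecPred.and
        (PrimrecRel.comp Primrec.eq (Primrec.fst.comp (Primrec.fst.comp Primrec.fst))
          (Primrec.fst.comp (Primrec.fst.comp Primrec.snd)))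
        (PrimrecRel.comp Primrec.eq (Primrec.snd.comp (Primrec.fst.comp Primrec.fst))
          (Primrec.not.comp (Primrec.snd.comp (Primrec.fst.comp Primrec.snd))))
    · exact Primrec.snd.comp Primrec.snd
    · exact Primrec.list_cons.comp (Primrec.fst.comp Primrec.fst)
        (Primrec.list_cons.comp (Primrec.fst.comp Primrec.snd)
          (Primrec.snd.comp Primrec.snd))
  have h := Primrec.list_casesOn
    (f := fun p : (ℕ × Bool) × List (ℕ × Bool) => p.2)
    (g := fun p : (ℕ × Bool) × List (ℕ × Bool) => ([p.1] : List (ℕ × Bool)))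
    Primrec.snd (Primrec.list_cons.comp Primrec.fst (.const [])) hh
  have h2 : Primrec fun p : (ℕ × Bool) × List (ℕ × Bool) => rStep p.1 p.2 :=
    h.of_eq fun ⟨x, ih⟩ => by cases ih <;> rfl
  exact h2

lemma primrec_reduce : Primrec (FreeGroup.reduce (α := ℕ)) := by
  have h : Primrec fun l : List (ℕ × Bool) => List.foldr rStep [] l :=
    Primrec.list_foldr Primrec.id (.const []) (primrec_rStep.comp
      (Primrec.fst.comp Primrec.snd) (Primrec.snd.comp Primrec.snd)).to₂
  exact h.of_eq fun l => (reduce_eq_foldr l).symm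

lemma primrec_wordOf : Primrec wordOf :=
  Primrec.list_map (primrec_codeList.comp (Primrec.ofNat (List ℕ)))
    (primrec_letterDec.comp Primrec.snd).to₂

lemma primrec_codeOfRed : Primrec codeOfRed :=
  Primrec.encode.comp (primrec_uncodeList.comp
    (Primrec.list_map Primrec.id (primrec_letterEnc.comp Primrec.snd).to₂))

lemma primrec_codeOf : Primrec codeOf :=
  primrec_codeOfRed.comp primrec_reduce

end Stmt14Aux

open Stmt14Aux in
theorem stmt14 (G : Type) [Group G] (ν : ℕ → G)
    (hsurj : Function.Surjective ν)
    -- the word problem of G relative to ν, coded by words in List (ℕ × Bool),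
    -- is computably enumerable
    (hce : REPred fun p : List (ℕ × Bool) × List (ℕ × Bool) =>
      (FreeGroup.lift ν) (FreeGroup.mk p.1) = (FreeGroup.lift ν) (FreeGroup.mk p.2)) :
    -- there is a group structure on ℕ with computable operations and a surjective
    -- homomorphism ν⁰ onto G with computably enumerable equality set
    ∃ (mul : ℕ → ℕ → ℕ) (inv : ℕ → ℕ) (e : ℕ) (ν0 : ℕ → G),
      Computable₂ mul ∧ Computable inv ∧
      -- group axioms
      (∀ a b c : ℕ, mul (mul a b) c = mul a (mul b c)) ∧
      (∀ a : ℕ, mul e a = a) ∧ (∀ a : ℕ, mul a e = a) ∧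
      (∀ a : ℕ, mul (inv a) a = e) ∧
      -- ν⁰ is a surjective homomorphism
      Function.Surjective ν0 ∧
      (∀ a b : ℕ, ν0 (mul a b) = ν0 a * ν0 b) ∧
      (∀ a : ℕ, ν0 (inv a) = (ν0 a)⁻¹) ∧ ν0 e = 1 ∧
      -- the equality set is computably enumerable
      REPred fun p : ℕ × ℕ => ν0 p.1 = ν0 p.2 := by
  classical
  have hmul : ∀ a b : ℕ, codeOf (wordOf a ++ wordOf b) = Ψ (Φ a * Φ b) := by
    intro a b
    unfold Ψ Φ codeOf
    rw [FreeGroup.mul_mk, FreeGroup.toWord_mk]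
  have hinv : ∀ a : ℕ, codeOf (FreeGroup.invRev (wordOf a)) = Ψ (Φ a)⁻¹ := by
    intro a
    unfold Ψ Φ codeOf
    rw [FreeGroup.inv_mk, FreeGroup.toWord_mk]
  have he : codeOfRed ([] : List (ℕ × Bool)) = Ψ 1 := by
    unfold Ψ
    rw [FreeGroup.toWord_one]
  refine ⟨fun a b => codeOf (wordOf a ++ wordOf b),
          fun a => codeOf (FreeGroup.invRev (wordOf a)),
          codeOfRed [],
          fun n => FreeGroup.lift ν (FreeGroup.mk (wordOf n)),
          ?_, ?_, ?_, ?_, ?_, ?_, ?_, ?_, ?_, ?_, ?_⟩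
  · -- Computable₂ mul
    exact (primrec_codeOf.comp (Primrec.list_append.comp
      (primrec_wordOf.comp Primrec.fst) (primrec_wordOf.comp Primrec.snd))).to₂.to_comp
  · -- Computable inv
    have hinvrev : Primrec (FreeGroup.invRev (α := ℕ)) := by
      have : Primrec fun l : List (ℕ × Bool) =>
          (l.map fun g : ℕ × Bool => (g.1, !g.2)).reverse :=
        Primrec.list_reverse.comp (Primrec.list_map Primrec.id
          ((Primrec.pair (Primrec.fst.comp Primrec.snd)
            (Primrec.not.comp (Primrec.snd.comp Primrec.snd)))).to₂)
      exact this.of_eq fun l => rfl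
    exact (primrec_codeOf.comp (hinvrev.comp primrec_wordOf)).to_comp
  · -- associativity
    intro a b c
    beta_reduce
    rw [hmul, hmul, hmul, hmul, Φ_Ψ, Φ_Ψ, mul_assoc]
  · -- left identity
    intro a
    beta_reduce
    rw [he, hmul, Φ_Ψ, one_mul, Ψ_Φ]
  · -- right identity
    intro a
    beta_reduce
    rw [he, hmul, Φ_Ψ, mul_one, Ψ_Φ]
  · -- left inverse
    intro a
    beta_reduce
    rw [hmul, hinv, Φ_Ψ, inv_mul_cancel, he]
  · -- surjectivity
    intro g
    obtain ⟨x, hx⟩ := hsurj g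
    refine ⟨Ψ (FreeGroup.of x), ?_⟩
    show FreeGroup.lift ν (Φ (Ψ (FreeGroup.of x))) = g
    rw [Φ_Ψ, FreeGroup.lift_apply_of, hx]
  · -- multiplicativity
    intro a b
    show FreeGroup.lift ν (Φ (codeOf (wordOf a ++ wordOf b))) =
      FreeGroup.lift ν (Φ a) * FreeGroup.lift ν (Φ b)
    rw [hmul, Φ_Ψ, map_mul]
  · -- inverses
    intro a
    show FreeGroup.lift ν (Φ (codeOf (FreeGroup.invRev (wordOf a)))) =
      (FreeGroup.lift ν (Φ a))⁻¹
    rw [hinv, Φ_Ψ, map_inv]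
  · -- identity
    show FreeGroup.lift ν (Φ (codeOfRed [])) = 1
    rw [he, Φ_Ψ, map_one]
  · -- computably enumerable equality set
    have hf : Computable fun p : ℕ × ℕ => (wordOf p.1, wordOf p.2) :=
      (Primrec.pair (primrec_wordOf.comp Primrec.fst)
        (primrec_wordOf.comp Primrec.snd)).to_comp
    exact Partrec.comp hce hf
end
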